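/- arXiv:1711.02428 — 2 statements merged into one kernel-verified Lean document; each statement's English description precedes it below -/
import Mathlib

section
/- (Theorem 3.2, Cheeger-type estimate for quantum graphs) For every nonzero test function f on the metric graph G one has α(G)²·‖f‖² ≤ 4·‖f′‖². Consequently, the bottom of the spectrum of the Kirchhoff Laplacian, λ₀(H) = inf over nonzero test functions f of ‖f′‖²/‖f‖², satisfies λ₀(H) ≥ α(G)²/4. -/
open scoped Classical ENNReal
open MeasureTheory

noncomputable section

/-- A real function on `[0, L]` which is continuous and piecewise continuously
differentiable: there is a finite partition `0 = x 0 < x 1 < ... < x n = L` such that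
on each closed piece the function has a continuous derivative. -/
def PiecewiseC1 (f : ℝ → ℝ) (L : ℝ) : Prop :=
  ContinuousOn f (Set.Icc 0 L) ∧
  ∃ (n : ℕ) (x : Fin (n + 1) → ℝ), x 0 = 0 ∧ x (Fin.last n) = L ∧ StrictMono x ∧
    ∀ i : Fin n, ∃ g : ℝ → ℝ,
      ContinuousOn g (Set.Icc (x i.castSucc) (x i.succ)) ∧
      ∀ t ∈ Set.Icc (x i.castSucc) (x i.succ),
        HasDerivWithinAt f (g t) (Set.Icc (x i.castSucc) (x i.succ)) t

/-- The underlying (unoriented) simple graph of a set of edges `E` with endpoint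
map `ends : E → V × V`. -/
def graphOf {V E : Type} (ends : E → V × V) : SimpleGraph V :=
  SimpleGraph.fromRel fun u v => ∃ e, ends e = (u, v)

/-- A metric graph: a connected, locally finite, simple combinatorial graph with
countably infinite vertex and edge sets, each edge having a finite positive length.
Each edge carries an (auxiliary) orientation given by `ends`. -/
structure MetricGraph : Type 1 where
  V : Type
  E : Type
  countV : Countable V
  infV : Infinite V
  countE : Countable E
  infE : Infinite E
  ends : E → V × V
  len : E → ℝ
  len_pos : ∀ e, 0 < len e
  no_loops : ∀ e, (ends e).1 ≠ (ends e).2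
  no_multi : Function.Injective fun e => Sym2.mk (ends e)
  locfin : ∀ v, {e | (ends e).1 = v ∨ (ends e).2 = v}.Finite
  conn : (graphOf ends).Connected

namespace MetricGraph

/-- The underlying simple graph. -/
def graph (Γ : MetricGraph) : SimpleGraph Γ.V := graphOf Γ.ends

/-- The star of a vertex: the set of edges incident to it. -/
def star (Γ : MetricGraph) (v : Γ.V) : Set Γ.E :=
  {e | (Γ.ends e).1 = v ∨ (Γ.ends e).2 = v}

/-- Combinatorial degree of a vertex. -/
def degree (Γ : MetricGraph) (v : Γ.V) : ℕ := (Γ.locfin v).toFinset.card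

/-- The vertices of a (finite) subgraph given by a finite set of edges. -/
def vertsOf (Γ : MetricGraph) (F : Finset Γ.E) : Finset Γ.V :=
  F.image (fun e => (Γ.ends e).1) ∪ F.image fun e => (Γ.ends e).2

/-- The degree of a vertex inside the subgraph given by the edge set `F`. -/
def degIn (Γ : MetricGraph) (F : Finset Γ.E) (v : Γ.V) : ℕ :=
  (F.filter fun e => (Γ.ends e).1 = v ∨ (Γ.ends e).2 = v).card

/-- Connectedness of the subgraph spanned by the edge set `F`. -/
def SubConn (Γ : MetricGraph) (F : Finset Γ.E) : Prop :=
  ((SimpleGraph.fromRel fun u v => ∃ e ∈ F, Γ.ends e = (u, v)).induce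
    (↑(Γ.vertsOf F) : Set Γ.V)).Connected

/-- A finite connected subgraph (with at least one edge), given by its edge set. -/
def IsFinSubgraph (Γ : MetricGraph) (F : Finset Γ.E) : Prop :=
  F.Nonempty ∧ Γ.SubConn F

/-- The boundary of a finite subgraph with respect to `Γ`: the vertices whose degree
in the subgraph is strictly smaller than the degree in `Γ`. -/
def bdry (Γ : MetricGraph) (F : Finset Γ.E) : Finset Γ.V :=
  (Γ.vertsOf F).filter fun v => Γ.degIn F v < Γ.degree v

/-- `deg (∂_G G̃)`. -/
def degBdry (Γ : MetricGraph) (F : Finset Γ.E) : ℝ :=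
  ∑ v ∈ Γ.bdry F, (Γ.degIn F v : ℝ)

/-- The total length (Lebesgue measure) of a finite subgraph. -/
def mes (Γ : MetricGraph) (F : Finset Γ.E) : ℝ := ∑ e ∈ F, Γ.len e

/-- The isoperimetric (Cheeger) constant of a metric graph. -/
def alpha (Γ : MetricGraph) : ℝ :=
  sInf {r : ℝ | ∃ F : Finset Γ.E, Γ.IsFinSubgraph F ∧ r = Γ.degBdry F / Γ.mes F}

/-- The isoperimetric constant at infinity, as an element of `[0,∞]`. -/
def alphaEssEnn (Γ : MetricGraph) : ℝ≥0∞ :=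
  ⨆ W : Finset Γ.E, ⨅ (F : Finset Γ.E) (_ : Γ.IsFinSubgraph F ∧ Disjoint F W),
    ENNReal.ofReal (Γ.degBdry F / Γ.mes F)

/-- The vertex weight `m(v) = Σ_{e ∈ E_v} |e|`. -/
def mweight (Γ : MetricGraph) (v : Γ.V) : ℝ :=
  ∑ e ∈ (Γ.locfin v).toFinset, Γ.len e

/-- The set of boundary edges of a vertex set: edges with exactly one endpoint in `X`. -/
def Eb (Γ : MetricGraph) (X : Set Γ.V) : Set Γ.E :=
  {e | Xor' ((Γ.ends e).1 ∈ X) ((Γ.ends e).2 ∈ X)}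

/-- The discrete isoperimetric constant of a vertex set `U`. -/
def alphaD (Γ : MetricGraph) (U : Set Γ.V) : ℝ :=
  sInf {r : ℝ | ∃ X : Finset Γ.V, ↑X ⊆ U ∧ X.Nonempty ∧
    r = ((Γ.Eb ↑X).ncard : ℝ) / ∑ v ∈ X, Γ.mweight v}

/-- The discrete isoperimetric constant at infinity, as an element of `[0,∞]`. -/
def alphaDEssEnn (Γ : MetricGraph) : ℝ≥0∞ :=
  ⨆ X : Finset Γ.V, ENNReal.ofReal (Γ.alphaD (↑X : Set Γ.V)ᶜ)

/-- The combinatorial isoperimetric constant. -/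
def alphaComb (Γ : MetricGraph) : ℝ :=
  sInf {r : ℝ | ∃ X : Finset Γ.V, X.Nonempty ∧
    r = ((Γ.Eb ↑X).ncard : ℝ) / ∑ v ∈ X, (Γ.degree v : ℝ)}

/-- `ℓ*(G) = sup of edge lengths`. -/
def ellSup (Γ : MetricGraph) : ℝ := sSup (Set.range Γ.len)

/-- `ℓ_*(G) = inf of edge lengths`. -/
def ellInf (Γ : MetricGraph) : ℝ := sInf (Set.range Γ.len)

/-- `ℓ*(G)` as an element of `[0,∞]`. -/
def ellSupEnn (Γ : MetricGraph) : ℝ≥0∞ := ⨆ e : Γ.E, ENNReal.ofReal (Γ.len e)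

/-- `ℓ*_ess(G) = inf_F sup_{e ∉ F} |e|` as an element of `[0,∞]`. -/
def ellSupEssEnn (Γ : MetricGraph) : ℝ≥0∞ :=
  ⨅ W : Finset Γ.E, ⨆ e : {e : Γ.E // e ∉ W}, ENNReal.ofReal (Γ.len (e : Γ.E))

/-- Outgoing edges at a vertex (for the fixed orientation). -/
def plusE (Γ : MetricGraph) (v : Γ.V) : Set Γ.E := {e | (Γ.ends e).1 = v}

/-- Incoming edges at a vertex (for the fixed orientation). -/
def minusE (Γ : MetricGraph) (v : Γ.V) : Set Γ.E := {e | (Γ.ends e).2 = v}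

/-- The curvature `K(v) = ((#E_v⁺ − #E_v⁻)/#E_v⁺) · inf_{e ∈ E_v⁺} 1/|e|`. -/
def Kcurv (Γ : MetricGraph) (v : Γ.V) : ℝ :=
  (((Γ.plusE v).ncard : ℝ) - ((Γ.minusE v).ncard : ℝ)) / ((Γ.plusE v).ncard : ℝ) *
    sInf ((fun e => 1 / Γ.len e) '' Γ.plusE v)

/-- The combinatorial curvature `K_comb(v) = 1 − #E_v⁻/#E_v⁺`. -/
def Kcomb (Γ : MetricGraph) (v : Γ.V) : ℝ :=
  1 - ((Γ.minusE v).ncard : ℝ) / ((Γ.plusE v).ncard : ℝ)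

/-- `liminf_{v ∈ V} K(v) = sup over finite W of inf_{v ∉ W} K(v)`, in `[0,∞]`. -/
def KcurvEssEnn (Γ : MetricGraph) : ℝ≥0∞ :=
  ⨆ W : Finset Γ.V, ⨅ v : {v : Γ.V // v ∉ W}, ENNReal.ofReal (Γ.Kcurv (v : Γ.V))

/-- `liminf_{v ∈ V} K_comb(v) = sup over finite W of inf_{v ∉ W} K_comb(v)`. -/
def KcombLiminf (Γ : MetricGraph) : ℝ :=
  sSup (Set.range fun W : Finset Γ.V => sInf (Γ.Kcomb '' (↑W : Set Γ.V)ᶜ))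

/-- The value of an edgewise function at an endpoint of an edge. -/
def endVal (Γ : MetricGraph) (f : Γ.E → ℝ → ℝ) (e : Γ.E) (v : Γ.V) : ℝ :=
  if (Γ.ends e).1 = v then f e 0 else f e (Γ.len e)

/-- A test function on the metric graph `Γ`: a family of continuous, piecewise `C¹`
functions on the edges, matching at the vertices, vanishing on all but finitely
many edges. -/
structure TestFun (Γ : MetricGraph) where
  f : Γ.E → ℝ → ℝ
  piecewise : ∀ e, PiecewiseC1 (f e) (Γ.len e)
  vertexCont : ∀ e e' : Γ.E, ∀ v : Γ.V, e ∈ Γ.star v → e' ∈ Γ.star v →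
    Γ.endVal f e v = Γ.endVal f e' v
  finSupp : {e : Γ.E | ∃ x ∈ Set.Icc 0 (Γ.len e), f e x ≠ 0}.Finite

/-- `‖f‖² = Σ_e ∫₀^{|e|} f_e(x)² dx`. -/
def TestFun.normSq {Γ : MetricGraph} (φ : TestFun Γ) : ℝ :=
  ∑ᶠ e : Γ.E, ∫ x in (0:ℝ)..Γ.len e, (φ.f e x) ^ 2

/-- `‖f′‖² = Σ_e ∫₀^{|e|} f_e′(x)² dx`. -/
def TestFun.energySq {Γ : MetricGraph} (φ : TestFun Γ) : ℝ :=
  ∑ᶠ e : Γ.E, ∫ x in (0:ℝ)..Γ.len e, (deriv (φ.f e) x) ^ 2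

/-- A test function is nonzero if it does not vanish identically on the graph. -/
def TestFun.Nonzero {Γ : MetricGraph} (φ : TestFun Γ) : Prop :=
  ∃ e : Γ.E, ∃ x ∈ Set.Icc 0 (Γ.len e), φ.f e x ≠ 0

/-- The bottom of the spectrum of the Kirchhoff Laplacian, via the variational
(Rayleigh quotient) characterization. -/
def lambda0 (Γ : MetricGraph) : ℝ :=
  sInf {r : ℝ | ∃ φ : TestFun Γ, φ.Nonzero ∧ r = φ.energySq / φ.normSq}

end MetricGraph

/-- A weighted graph `(V, m, b)`: a connected, locally finite, simple combinatorial
graph with countably infinite vertex and edge sets, an edge weight `b` and a vertex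
weight `m`. -/
structure WeightedGraph : Type 1 where
  V : Type
  E : Type
  countV : Countable V
  infV : Infinite V
  countE : Countable E
  infE : Infinite E
  ends : E → V × V
  no_loops : ∀ e, (ends e).1 ≠ (ends e).2
  no_multi : Function.Injective fun e => Sym2.mk (ends e)
  locfin : ∀ v, {e | (ends e).1 = v ∨ (ends e).2 = v}.Finite
  conn : (graphOf ends).Connected
  b : E → ℝ
  b_pos : ∀ e, 0 < b e
  m : V → ℝ
  m_pos : ∀ v, 0 < m v

namespace WeightedGraph

/-- An edge weight `d` is intrinsic if `Σ_{e ∈ E_v} d(e)² b(e) ≤ m(v)` for all `v`. -/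
def Intrinsic (Γ : WeightedGraph) (d : Γ.E → ℝ) : Prop :=
  ∀ v, ∑ e ∈ (Γ.locfin v).toFinset, d e ^ 2 * Γ.b e ≤ Γ.m v

/-- The boundary edges of a vertex set: edges with exactly one endpoint in `X`. -/
def Eb (Γ : WeightedGraph) (X : Set Γ.V) : Set Γ.E :=
  {e | Xor' ((Γ.ends e).1 ∈ X) ((Γ.ends e).2 ∈ X)}

/-- The discrete isoperimetric constant `α_d(U)` with respect to the weight `d`. -/
def alphaD (Γ : WeightedGraph) (d : Γ.E → ℝ) (U : Set Γ.V) : ℝ :=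
  sInf {r : ℝ | ∃ X : Finset Γ.V, ↑X ⊆ U ∧ X.Nonempty ∧
    r = (∑ᶠ e ∈ Γ.Eb ↑X, d e * Γ.b e) / ∑ v ∈ X, Γ.m v}

/-- The discrete isoperimetric constant at infinity, in `[0,∞]`. -/
def alphaDEssEnn (Γ : WeightedGraph) (d : Γ.E → ℝ) : ℝ≥0∞ :=
  ⨆ X : Finset Γ.V, ENNReal.ofReal (Γ.alphaD d (↑X : Set Γ.V)ᶜ)

/-- The energy form `Q(u) = Σ_e b(e) (u(e_i) − u(e_0))²`. -/
def Q (Γ : WeightedGraph) (u : Γ.V → ℝ) : ℝ :=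
  ∑ᶠ e : Γ.E, Γ.b e * (u (Γ.ends e).2 - u (Γ.ends e).1) ^ 2

/-- The squared norm `Σ_v m(v) u(v)²`. -/
def normSqD (Γ : WeightedGraph) (u : Γ.V → ℝ) : ℝ :=
  ∑ᶠ v : Γ.V, Γ.m v * u v ^ 2

/-- The bottom of the spectrum of the Friedrichs extension of the weighted Laplacian,
via the variational characterization over finitely supported functions. -/
def lambda0 (Γ : WeightedGraph) : ℝ :=
  sInf {r : ℝ | ∃ u : Γ.V → ℝ, (Function.support u).Finite ∧ u ≠ 0 ∧
    r = Γ.Q u / Γ.normSqD u}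

/-- The bottom of the essential spectrum of the Friedrichs extension, via Glazman's
decomposition principle, in `[0,∞]`. -/
def lambda0EssEnn (Γ : WeightedGraph) : ℝ≥0∞ :=
  ⨆ X : Finset Γ.V, ⨅ (u : Γ.V → ℝ)
    (_ : (Function.support u).Finite ∧ u ≠ 0 ∧ ∀ v ∈ X, u v = 0),
      ENNReal.ofReal (Γ.Q u / Γ.normSqD u)

end WeightedGraph

noncomputable section Aux

namespace MetricGraph

variable (Γ : MetricGraph)

lemma mem_vertsOf {F : Finset Γ.E} {v : Γ.V} :
    v ∈ Γ.vertsOf F ↔ ∃ e ∈ F, (Γ.ends e).1 = v ∨ (Γ.ends e).2 = v := by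
  simp only [vertsOf, Finset.mem_union, Finset.mem_image]
  constructor
  · rintro (⟨e, he, rfl⟩ | ⟨e, he, rfl⟩)
    · exact ⟨e, he, Or.inl rfl⟩
    · exact ⟨e, he, Or.inr rfl⟩
  · rintro ⟨e, he, (rfl | rfl)⟩
    · exact Or.inl ⟨e, he, rfl⟩
    · exact Or.inr ⟨e, he, rfl⟩

lemma mes_nonneg (F : Finset Γ.E) : 0 ≤ Γ.mes F :=
  Finset.sum_nonneg fun e _ => (Γ.len_pos e).le

lemma mes_pos {F : Finset Γ.E} (hF : F.Nonempty) : 0 < Γ.mes F :=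
  Finset.sum_pos (fun e _ => Γ.len_pos e) hF

lemma degBdry_nonneg (F : Finset Γ.E) : 0 ≤ Γ.degBdry F :=
  Finset.sum_nonneg fun v _ => by positivity

lemma alpha_set_bddBelow :
    BddBelow {r : ℝ | ∃ F : Finset Γ.E, Γ.IsFinSubgraph F ∧ r = Γ.degBdry F / Γ.mes F} := by
  refine ⟨0, ?_⟩
  rintro r ⟨F, _, rfl⟩
  exact div_nonneg (Γ.degBdry_nonneg F) (Γ.mes_nonneg F)

lemma alpha_nonneg : 0 ≤ Γ.alpha := by
  apply Real.sInf_nonneg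
  rintro r ⟨F, _, rfl⟩
  exact div_nonneg (Γ.degBdry_nonneg F) (Γ.mes_nonneg F)

/-- Key combinatorial lemma: for ANY nonempty finite edge set (connected or not),
`α · mes F ≤ degBdry F`. -/
lemma alpha_mul_mes_le : ∀ F : Finset Γ.E, F.Nonempty → Γ.alpha * Γ.mes F ≤ Γ.degBdry F := by
  intro F
  induction F using Finset.strongInductionOn with
  | _ F IH =>
  intro hF
  by_cases hc : Γ.SubConn F
  · have hmem : Γ.degBdry F / Γ.mes F ∈
        {r : ℝ | ∃ F : Finset Γ.E, Γ.IsFinSubgraph F ∧ r = Γ.degBdry F / Γ.mes F} :=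
      ⟨F, ⟨hF, hc⟩, rfl⟩
    have h1 : Γ.alpha ≤ Γ.degBdry F / Γ.mes F := csInf_le (Γ.alpha_set_bddBelow) hmem
    have hm := Γ.mes_pos hF
    calc Γ.alpha * Γ.mes F ≤ (Γ.degBdry F / Γ.mes F) * Γ.mes F :=
          mul_le_mul_of_nonneg_right h1 hm.le
      _ = Γ.degBdry F := div_mul_cancel₀ _ hm.ne'
  · -- disconnected: split off the component of a fixed vertex
    classical
    set H : SimpleGraph Γ.V := SimpleGraph.fromRel fun u v => ∃ e ∈ F, Γ.ends e = (u, v) with hH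
    obtain ⟨e₀, he₀⟩ := hF
    set v₀ : Γ.V := (Γ.ends e₀).1 with hv₀def
    have hv₀ : v₀ ∈ Γ.vertsOf F := (Γ.mem_vertsOf).2 ⟨e₀, he₀, Or.inl rfl⟩
    set K : Finset Γ.V := (Γ.vertsOf F).filter (fun u => H.Reachable v₀ u) with hK
    -- edges of F give adjacency in H
    have hadj : ∀ e ∈ F, H.Adj (Γ.ends e).1 (Γ.ends e).2 := by
      intro e he
      rw [hH, SimpleGraph.fromRel_adj]
      exact ⟨Γ.no_loops e, Or.inl ⟨e, he, rfl⟩⟩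
    -- all H-edges have both endpoints in vertsOf F
    have hHv : ∀ {a b : Γ.V}, H.Adj a b → a ∈ Γ.vertsOf F ∧ b ∈ Γ.vertsOf F := by
      intro a b hab
      rw [hH, SimpleGraph.fromRel_adj] at hab
      rcases hab.2 with ⟨e, he, hab'⟩ | ⟨e, he, hab'⟩
      · exact ⟨(Γ.mem_vertsOf).2 ⟨e, he, Or.inl (by rw [hab'])⟩,
          (Γ.mem_vertsOf).2 ⟨e, he, Or.inr (by rw [hab'])⟩⟩
      · exact ⟨(Γ.mem_vertsOf).2 ⟨e, he, Or.inr (by rw [hab'])⟩,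
          (Γ.mem_vertsOf).2 ⟨e, he, Or.inl (by rw [hab'])⟩⟩
    have hclos : ∀ e ∈ F, ((Γ.ends e).1 ∈ K ↔ (Γ.ends e).2 ∈ K) := by
      intro e he
      have h1 := hadj e he
      constructor
      · intro h
        rw [hK, Finset.mem_filter] at h ⊢
        exact ⟨(Γ.mem_vertsOf).2 ⟨e, he, Or.inr rfl⟩, h.2.trans h1.reachable⟩
      · intro h
        rw [hK, Finset.mem_filter] at h ⊢
        exact ⟨(Γ.mem_vertsOf).2 ⟨e, he, Or.inl rfl⟩, h.2.trans h1.symm.reachable⟩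
    set F₁ : Finset Γ.E := F.filter (fun e => (Γ.ends e).1 ∈ K ∧ (Γ.ends e).2 ∈ K) with hF₁def
    set F₂ : Finset Γ.E := F \ F₁ with hF₂def
    have hsub₁ : F₁ ⊆ F := Finset.filter_subset _ _
    have hmemF₁ : ∀ e ∈ F, (e ∈ F₁ ↔ (Γ.ends e).1 ∈ K) := by
      intro e he
      rw [hF₁def, Finset.mem_filter]
      constructor
      · exact fun h => h.2.1
      · intro h
        exact ⟨he, h, (hclos e he).1 h⟩
    have hv₀K : v₀ ∈ K := by
      rw [hK, Finset.mem_filter]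
      exact ⟨hv₀, SimpleGraph.Reachable.refl _⟩
    have he₀F₁ : e₀ ∈ F₁ := (hmemF₁ e₀ he₀).2 hv₀K
    have hne₁ : F₁.Nonempty := ⟨e₀, he₀F₁⟩
    have hF₂K : ∀ e ∈ F₂, (Γ.ends e).1 ∉ K ∧ (Γ.ends e).2 ∉ K := by
      intro e he
      rw [hF₂def, Finset.mem_sdiff] at he
      have h1 : (Γ.ends e).1 ∉ K := fun h => he.2 ((hmemF₁ e he.1).2 h)
      exact ⟨h1, fun h => h1 ((hclos e he.1).2 h)⟩
    -- F₂ nonempty, else F would be connected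
    have hne₂ : F₂.Nonempty := by
      rw [Finset.nonempty_iff_ne_empty]
      intro hF₂e
      have hallK : ∀ u ∈ Γ.vertsOf F, u ∈ K := by
        intro u hu
        obtain ⟨e, he, hend⟩ := (Γ.mem_vertsOf).1 hu
        have heF₁ : e ∈ F₁ := by
          by_contra h
          exact (Finset.notMem_empty e) (hF₂e ▸ (Finset.mem_sdiff.2 ⟨he, h⟩))
        rw [hF₁def, Finset.mem_filter] at heF₁
        rcases hend with h | h
        · exact h ▸ heF₁.2.1
        · exact h ▸ heF₁.2.2
      -- reachability transfers to the induced graph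
      have htrans : ∀ (u w : Γ.V) (p : H.Walk u w) (hu : u ∈ Γ.vertsOf F)
          (hw : w ∈ Γ.vertsOf F),
          (H.induce (↑(Γ.vertsOf F) : Set Γ.V)).Reachable ⟨u, hu⟩ ⟨w, hw⟩ := by
        intro u w p
        induction p with
        | nil => intro hu hw; rfl
        | @cons a b c hab p ih =>
          intro hu hw
          have hb : b ∈ Γ.vertsOf F := (hHv hab).2
          refine SimpleGraph.Reachable.trans ?_ (ih hb hw)
          exact SimpleGraph.Adj.reachable (by simpa using hab)
      have hconn : (H.induce (↑(Γ.vertsOf F) : Set Γ.V)).Connected := by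
        rw [SimpleGraph.connected_iff]
        refine ⟨?_, ⟨⟨v₀, by exact_mod_cast hv₀⟩⟩⟩
        intro a b
        have ha := hallK a.1 (by exact_mod_cast a.2)
        have hb := hallK b.1 (by exact_mod_cast b.2)
        rw [hK, Finset.mem_filter] at ha hb
        obtain ⟨pa⟩ := ha.2
        obtain ⟨pb⟩ := hb.2
        have h1 := htrans v₀ a.1 pa hv₀ ha.1
        have h2 := htrans v₀ b.1 pb hv₀ hb.1
        have h1' : (H.induce (↑(Γ.vertsOf F) : Set Γ.V)).Reachable ⟨v₀, hv₀⟩ a := by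
          convert h1 using 2 <;> simp
        have h2' : (H.induce (↑(Γ.vertsOf F) : Set Γ.V)).Reachable ⟨v₀, hv₀⟩ b := by
          convert h2 using 2 <;> simp
        exact h1'.symm.trans h2'
      exact hc hconn
    -- splitting identities
    have hunion : F = F₁ ∪ F₂ := by
      rw [hF₂def, Finset.union_sdiff_of_subset hsub₁]
    have hdisjE : Disjoint F₁ F₂ := Finset.disjoint_sdiff
    have hverts₁ : ∀ v ∈ Γ.vertsOf F₁, v ∈ K := by
      intro v hv
      obtain ⟨e, he, hend⟩ := (Γ.mem_vertsOf).1 hv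
      rw [hF₁def, Finset.mem_filter] at he
      rcases hend with h | h
      · exact h ▸ he.2.1
      · exact h ▸ he.2.2
    have hverts₂ : ∀ v ∈ Γ.vertsOf F₂, v ∉ K := by
      intro v hv
      obtain ⟨e, he, hend⟩ := (Γ.mem_vertsOf).1 hv
      rcases hend with h | h
      · exact h ▸ (hF₂K e he).1
      · exact h ▸ (hF₂K e he).2
    have hdisjV : Disjoint (Γ.vertsOf F₁) (Γ.vertsOf F₂) := by
      rw [Finset.disjoint_left]
      exact fun v h1 h2 => hverts₂ v h2 (hverts₁ v h1)
    have hvertsU : Γ.vertsOf F = Γ.vertsOf F₁ ∪ Γ.vertsOf F₂ := by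
      ext v
      simp only [Finset.mem_union, mem_vertsOf]
      constructor
      · rintro ⟨e, he, h⟩
        rw [hunion, Finset.mem_union] at he
        rcases he with he | he
        · exact Or.inl ⟨e, he, h⟩
        · exact Or.inr ⟨e, he, h⟩
      · rintro (⟨e, he, h⟩ | ⟨e, he, h⟩)
        · exact ⟨e, hsub₁ he, h⟩
        · exact ⟨e, (Finset.sdiff_subset) he, h⟩
    have hdegIn₁ : ∀ v ∈ Γ.vertsOf F₁, Γ.degIn F v = Γ.degIn F₁ v := by
      intro v hv
      have hvK := hverts₁ v hv
      unfold degIn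
      congr 1
      ext e
      simp only [Finset.mem_filter]
      constructor
      · rintro ⟨he, hend⟩
        refine ⟨(hmemF₁ e he).2 ?_, hend⟩
        rcases hend with h | h
        · exact h ▸ hvK
        · exact (hclos e he).2 (h ▸ hvK)
      · rintro ⟨he, hend⟩
        exact ⟨hsub₁ he, hend⟩
    have hdegIn₂ : ∀ v ∈ Γ.vertsOf F₂, Γ.degIn F v = Γ.degIn F₂ v := by
      intro v hv
      have hvK := hverts₂ v hv
      unfold degIn
      congr 1
      ext e
      simp only [Finset.mem_filter]
      constructor
      · rintro ⟨he, hend⟩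
        refine ⟨?_, hend⟩
        rw [hF₂def, Finset.mem_sdiff]
        refine ⟨he, fun heF₁ => ?_⟩
        rw [hF₁def, Finset.mem_filter] at heF₁
        rcases hend with h | h
        · exact hvK (h ▸ heF₁.2.1)
        · exact hvK (h ▸ heF₁.2.2)
      · rintro ⟨he, hend⟩
        exact ⟨(Finset.sdiff_subset) he, hend⟩
    have hbdry : Γ.bdry F = Γ.bdry F₁ ∪ Γ.bdry F₂ := by
      unfold bdry
      rw [hvertsU, Finset.filter_union]
      congr 1
      · apply Finset.filter_congr
        intro v hv
        rw [hdegIn₁ v hv]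
      · apply Finset.filter_congr
        intro v hv
        rw [hdegIn₂ v hv]
    have hbdrydisj : Disjoint (Γ.bdry F₁) (Γ.bdry F₂) :=
      hdisjV.mono (Finset.filter_subset _ _) (Finset.filter_subset _ _)
    have hdegBdry : Γ.degBdry F = Γ.degBdry F₁ + Γ.degBdry F₂ := by
      unfold degBdry
      rw [hbdry, Finset.sum_union hbdrydisj]
      congr 1
      · apply Finset.sum_congr rfl
        intro v hv
        rw [hdegIn₁ v (Finset.filter_subset _ _ hv)]
      · apply Finset.sum_congr rfl
        intro v hv
        rw [hdegIn₂ v (Finset.filter_subset _ _ hv)]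
    have hmes : Γ.mes F = Γ.mes F₁ + Γ.mes F₂ := by
      unfold mes
      rw [hunion, Finset.sum_union hdisjE]
    have hss₁ : F₁ ⊂ F := by
      obtain ⟨e, he⟩ := hne₂
      rw [hF₂def, Finset.mem_sdiff] at he
      exact ⟨hsub₁, fun h => he.2 (h he.1)⟩
    have hss₂ : F₂ ⊂ F := by
      refine ⟨Finset.sdiff_subset, fun h => ?_⟩
      have := h he₀
      rw [hF₂def, Finset.mem_sdiff] at this
      exact this.2 he₀F₁
    have h1 := IH F₁ hss₁ hne₁
    have h2 := IH F₂ hss₂ hne₂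
    rw [hdegBdry, hmes, mul_add]
    exact add_le_add h1 h2

end MetricGraph

end Aux
noncomputable section EdgeAux

open MeasureTheory intervalIntegral

/-- helper: integrability on a piece from a continuous model agreeing on the interior -/
lemma integrableOn_piece_congr {F G : ℝ → ℝ} {p q : ℝ} (hpq : p ≤ q)
    (hG : ContinuousOn G (Set.Icc p q)) (hEq : ∀ u ∈ Set.Ioo p q, F u = G u) :
    IntervalIntegrable F volume p q := by
  rw [intervalIntegrable_iff_integrableOn_Ioc_of_le hpq]
  have h1 : IntegrableOn G (Set.Ioc p q) :=
    (hG.integrableOn_Icc).mono_set Set.Ioc_subset_Icc_self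
  have hres : volume.restrict (Set.Ioc p q) = volume.restrict (Set.Ioo p q) :=
    MeasureTheory.Measure.restrict_congr_set (MeasureTheory.Ioo_ae_eq_Ioc).symm
  have hae : G =ᵐ[volume.restrict (Set.Ioc p q)] F := by
    rw [hres]
    exact ((MeasureTheory.ae_restrict_iff' measurableSet_Ioo).2
      (Filter.Eventually.of_forall fun u hu => (hEq u hu).symm))
  exact h1.congr hae

/-- helper: covering a point of `[a 0, a n]` by a piece -/
lemma mem_piece_of_mem_Icc {a : ℕ → ℝ} : ∀ {n : ℕ}, 0 < n → (∀ k, k < n → a k ≤ a (k+1)) →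
    ∀ {u : ℝ}, u ∈ Set.Icc (a 0) (a n) → ∃ i, i < n ∧ u ∈ Set.Icc (a i) (a (i+1)) := by
  intro n
  induction n with
  | zero => omega
  | succ m ih =>
    intro _ hmono u hu
    rcases Nat.eq_zero_or_pos m with hm | hm
    · subst hm; exact ⟨0, by omega, hu⟩
    by_cases hum : u ≤ a m
    · obtain ⟨i, hi, hmem⟩ := ih hm (fun k hk => hmono k (by omega)) ⟨hu.1, hum⟩
      exact ⟨i, by omega, hmem⟩
    · exact ⟨m, by omega, ⟨le_of_not_ge hum, hu.2⟩⟩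

/-- extract a ℕ-indexed partition from PiecewiseC1 -/
lemma PiecewiseC1.nat_partition {f : ℝ → ℝ} {L : ℝ} (hf : PiecewiseC1 f L) (hL : 0 < L) :
    ∃ (n : ℕ) (a : ℕ → ℝ), 0 < n ∧ a 0 = 0 ∧ a n = L ∧
      (∀ k, k < n → a k < a (k+1)) ∧
      (∀ k, k ≤ n → a k ∈ Set.Icc 0 L) ∧
      (∀ i, i < n → ∃ g : ℝ → ℝ, ContinuousOn g (Set.Icc (a i) (a (i+1))) ∧
        ∀ u ∈ Set.Icc (a i) (a (i+1)), HasDerivWithinAt f (g u) (Set.Icc (a i) (a (i+1))) u) := by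
  obtain ⟨hcont, n, x, hx0, hxL, hmono, hpiece⟩ := hf
  have hn : 0 < n := by
    rcases Nat.eq_zero_or_pos n with h | h
    · exfalso
      subst h
      have : (Fin.last 0) = (0 : Fin 1) := rfl
      rw [this, hx0] at hxL
      linarith
    · exact h
  set a : ℕ → ℝ := fun k => if h : k ≤ n then x ⟨k, by omega⟩ else L with hadef
  have ha : ∀ k (hk : k ≤ n), a k = x ⟨k, by omega⟩ := by
    intro k hk
    rw [hadef]
    simp only [dif_pos hk]
  refine ⟨n, a, hn, ?_, ?_, ?_, ?_, ?_⟩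
  · rw [ha 0 (by omega), ← hx0]
    congr 1
  · rw [ha n le_rfl, ← hxL]
    congr 1
  · intro k hk
    rw [ha k (by omega), ha (k+1) (by omega)]
    exact hmono (Fin.mk_lt_mk.2 (by omega))
  · intro k hk
    rw [ha k hk]
    constructor
    · have := hmono.monotone (show (0 : Fin (n+1)) ≤ ⟨k, by omega⟩ from Fin.zero_le _)
      rwa [hx0] at this
    · have := hmono.monotone (show (⟨k, by omega⟩ : Fin (n+1)) ≤ Fin.last n from Fin.le_last _)
      rwa [hxL] at this
  · intro i hi
    obtain ⟨g, hg1, hg2⟩ := hpiece ⟨i, hi⟩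
    have e1 : x (⟨i, hi⟩ : Fin n).castSucc = a i := by
      rw [ha i (by omega)]
      congr 1
    have e2 : x (⟨i, hi⟩ : Fin n).succ = a (i+1) := by
      rw [ha (i+1) (by omega)]
      congr 1
    rw [e1, e2] at hg1 hg2
    exact ⟨g, hg1, hg2⟩

/-- per-piece analysis package -/
lemma piece_pkg {f g : ℝ → ℝ} {p q : ℝ} (hpq : p < q)
    (hcontf : ContinuousOn f (Set.Icc p q))
    (hg : ContinuousOn g (Set.Icc p q))
    (hdf : ∀ u ∈ Set.Ioo p q, HasDerivAt f (g u) u ∧ deriv f u = g u) :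
    IntervalIntegrable (fun u => 2 * (|f u| * |deriv f u|)) volume p q ∧
    IntervalIntegrable (fun u => (deriv f u)^2) volume p q ∧
    IntervalIntegrable (fun u => |f u| * |deriv f u|) volume p q ∧
    (sSup ((fun u => (f u)^2) '' Set.Icc p q) - (f p)^2)
      + (sSup ((fun u => (f u)^2) '' Set.Icc p q) - (f q)^2)
      ≤ ∫ u in p..q, 2 * (|f u| * |deriv f u|) := by
  have habs : ContinuousOn (fun u => |f u|) (Set.Icc p q) := hcontf.abs
  have hgabs : ContinuousOn (fun u => |g u|) (Set.Icc p q) := hg.abs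
  have Int1 : IntervalIntegrable (fun u => 2 * (|f u| * |deriv f u|)) volume p q := by
    apply integrableOn_piece_congr hpq.le (G := fun u => 2 * (|f u| * |g u|))
    · exact (continuousOn_const.mul (habs.mul hgabs))
    · intro u hu; rw [(hdf u hu).2]
  have Int2 : IntervalIntegrable (fun u => (deriv f u)^2) volume p q := by
    apply integrableOn_piece_congr hpq.le (G := fun u => (g u)^2)
    · exact hg.pow 2
    · intro u hu; rw [(hdf u hu).2]
  have Int3 : IntervalIntegrable (fun u => |f u| * |deriv f u|) volume p q := by
    apply integrableOn_piece_congr hpq.le (G := fun u => |f u| * |g u|)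
    · exact habs.mul hgabs
    · intro u hu; rw [(hdf u hu).2]
  refine ⟨Int1, Int2, Int3, ?_⟩
  set g2 : ℝ → ℝ := fun u => (f u)^2 with hg2def
  have hg2 : ContinuousOn g2 (Set.Icc p q) := hcontf.pow 2
  set D : ℝ → ℝ := fun u => 2 * (f u * deriv f u) with hDdef
  have hd2 : ∀ u ∈ Set.Ioo p q, HasDerivAt g2 (D u) u := by
    intro u hu
    have h := ((hdf u hu).1).pow 2
    have : (2 : ℕ) * f u ^ (2 - 1) * g u = D u := by
      rw [hDdef]
      simp only []
      rw [← (hdf u hu).2]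
      ring
    rw [this] at h
    exact h
  have IntD : IntervalIntegrable D volume p q := by
    apply integrableOn_piece_congr hpq.le (G := fun u => 2 * (f u * g u))
    · exact continuousOn_const.mul ((hcontf).mul hg)
    · intro u hu; rw [hDdef]; simp only []; rw [(hdf u hu).2]
  have hptD : ∀ u, D u ≤ 2 * (|f u| * |deriv f u|) := by
    intro u
    calc D u ≤ |D u| := le_abs_self _
      _ = 2 * (|f u| * |deriv f u|) := by
          rw [hDdef]; simp only []
          rw [abs_mul, abs_mul, abs_two]
  have hptD' : ∀ u, -(2 * (|f u| * |deriv f u|)) ≤ D u := by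
    intro u
    have : -D u ≤ |D u| := neg_le_abs _
    have h2 : |D u| = 2 * (|f u| * |deriv f u|) := by
      rw [hDdef]; simp only []; rw [abs_mul, abs_mul, abs_two]
    linarith [this, h2.le]
  -- argmax
  have hne : (Set.Icc p q).Nonempty := Set.nonempty_Icc.2 hpq.le
  obtain ⟨c, hcmem, hcmax⟩ := isCompact_Icc.exists_isMaxOn hne hg2
  have hMc : sSup (g2 '' Set.Icc p q) = g2 c := by
    apply le_antisymm
    · apply csSup_le (hne.image _)
      rintro y ⟨u, hu, rfl⟩
      exact hcmax hu
    · exact le_csSup (isCompact_Icc.image_of_continuousOn hg2).bddAbove ⟨c, hcmem, rfl⟩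
  -- FTC on [p,c] and [c,q]
  have hftc : ∀ r s : ℝ, p ≤ r → r ≤ s → s ≤ q → ∫ u in r..s, D u = g2 s - g2 r := by
    intro r s hr hrs hs
    apply intervalIntegral.integral_eq_sub_of_hasDeriv_right_of_le hrs
    · exact hg2.mono (Set.Icc_subset_Icc hr hs)
    · intro x hx
      exact (hd2 x ⟨lt_of_le_of_lt hr hx.1, lt_of_lt_of_le hx.2 hs⟩).hasDerivWithinAt
    · exact IntD.mono_set (Set.uIcc_subset_uIcc_iff_le.2
        ⟨by rw [min_eq_left hrs, min_eq_left hpq.le]; exact hr,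
         by rw [max_eq_right hrs, max_eq_right hpq.le]; exact hs⟩)
  have IntDpc : IntervalIntegrable D volume p c :=
    IntD.mono_set (Set.uIcc_subset_uIcc_iff_le.2
      ⟨by rw [min_eq_left hcmem.1, min_eq_left hpq.le],
       by rw [max_eq_right hcmem.1, max_eq_right hpq.le]; exact hcmem.2⟩)
  have IntDcq : IntervalIntegrable D volume c q :=
    IntD.mono_set (Set.uIcc_subset_uIcc_iff_le.2
      ⟨by rw [min_eq_left hcmem.2, min_eq_left hpq.le]; exact hcmem.1,
       by rw [max_eq_right hcmem.2, max_eq_right hpq.le]⟩)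
  have Int1pc : IntervalIntegrable (fun u => 2 * (|f u| * |deriv f u|)) volume p c :=
    Int1.mono_set (Set.uIcc_subset_uIcc_iff_le.2
      ⟨by rw [min_eq_left hcmem.1, min_eq_left hpq.le],
       by rw [max_eq_right hcmem.1, max_eq_right hpq.le]; exact hcmem.2⟩)
  have Int1cq : IntervalIntegrable (fun u => 2 * (|f u| * |deriv f u|)) volume c q :=
    Int1.mono_set (Set.uIcc_subset_uIcc_iff_le.2
      ⟨by rw [min_eq_left hcmem.2, min_eq_left hpq.le]; exact hcmem.1,
       by rw [max_eq_right hcmem.2, max_eq_right hpq.le]⟩)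
  have b1 : g2 c - g2 p ≤ ∫ u in p..c, 2 * (|f u| * |deriv f u|) := by
    rw [← hftc p c le_rfl hcmem.1 hcmem.2]
    exact intervalIntegral.integral_mono_on hcmem.1 IntDpc Int1pc (fun u _ => hptD u)
  have b2 : g2 c - g2 q ≤ ∫ u in c..q, 2 * (|f u| * |deriv f u|) := by
    have h1 : ∫ u in c..q, D u = g2 q - g2 c := hftc c q hcmem.1 hcmem.2 le_rfl
    have h2 : ∫ u in c..q, -(2 * (|f u| * |deriv f u|)) ≤ ∫ u in c..q, D u :=
      intervalIntegral.integral_mono_on hcmem.2 Int1cq.neg IntDcq (fun u _ => hptD' u)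
    rw [intervalIntegral.integral_neg] at h2
    linarith [h1, h2]
  have hsplit : ∫ u in p..q, 2 * (|f u| * |deriv f u|)
      = (∫ u in p..c, 2 * (|f u| * |deriv f u|)) + ∫ u in c..q, 2 * (|f u| * |deriv f u|) :=
    (intervalIntegral.integral_add_adjacent_intervals Int1pc Int1cq).symm
  rw [hMc, hsplit]
  have hfp : (f p)^2 = g2 p := rfl
  have hfq : (f q)^2 = g2 q := rfl
  rw [hfp, hfq]
  linarith [b1, b2]

end EdgeAux
noncomputable section EdgeMain

open MeasureTheory intervalIntegral

lemma edge_main (f : ℝ → ℝ) (L : ℝ) (hL : 0 < L) (hf : PiecewiseC1 f L) :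
    ∃ (n : ℕ) (lo hi : Fin n × Fin 2 → ℝ),
      (∀ j, 0 ≤ lo j ∧ lo j ≤ hi j) ∧
      IntervalIntegrable (fun u => (f u)^2) volume 0 L ∧
      IntervalIntegrable (fun u => (deriv f u)^2) volume 0 L ∧
      ((∑ j, (hi j - lo j)) ≤
        2 * (Real.sqrt (∫ u in (0:ℝ)..L, (f u)^2) *
             Real.sqrt (∫ u in (0:ℝ)..L, (deriv f u)^2))) ∧
      (∀ t : ℝ, 0 < t → (∀ j, lo j ≠ t) → (∃ u ∈ Set.Icc 0 L, t < (f u)^2) →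
        ((if (f 0)^2 < t then 1 else 0) + (if (f L)^2 < t then 1 else 0) : ℕ)
          ≤ (Finset.univ.filter fun j : Fin n × Fin 2 => lo j < t ∧ t < hi j).card) ∧
      (∃ j, lo j = (f 0)^2) ∧ (∃ j, lo j = (f L)^2) := by
  classical
  have hcont : ContinuousOn f (Set.Icc 0 L) := hf.1
  obtain ⟨n, a, hn, ha0, haL, hlt, hmemIcc, hpiece⟩ := hf.nat_partition hL
  choose g hgc hgd using hpiece
  have hsub : ∀ i (hi : i < n), Set.Icc (a i) (a (i+1)) ⊆ Set.Icc 0 L := by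
    intro i hi
    exact Set.Icc_subset_Icc (hmemIcc i (by omega)).1 (hmemIcc (i+1) (by omega)).2
  have hdf : ∀ i (hi : i < n), ∀ u ∈ Set.Ioo (a i) (a (i+1)),
      HasDerivAt f (g i hi u) u ∧ deriv f u = g i hi u := by
    intro i hi u hu
    have h1 : Set.Icc (a i) (a (i+1)) ∈ nhds u := Icc_mem_nhds hu.1 hu.2
    have h2 := (hgd i hi u (Set.Ioo_subset_Icc_self hu)).hasDerivAt h1
    exact ⟨h2, h2.deriv⟩
  have pk := fun i (hi : i < n) =>
    piece_pkg (hlt i hi) (hcont.mono (hsub i hi)) (hgc i hi) (hdf i hi)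
  set y : ℕ → ℝ := fun k => (f (a k))^2 with hydef
  set M : ℕ → ℝ := fun i => sSup ((fun u => (f u)^2) '' Set.Icc (a i) (a (i+1))) with hMdef
  have hbdd : ∀ i (hi : i < n), BddAbove ((fun u => (f u)^2) '' Set.Icc (a i) (a (i+1))) :=
    fun i hi => (isCompact_Icc.image_of_continuousOn
      ((hcont.mono (hsub i hi)).pow 2)).bddAbove
  have hMp : ∀ i (hi : i < n), ∀ u ∈ Set.Icc (a i) (a (i+1)), (f u)^2 ≤ M i :=
    fun i hi u hu => le_csSup (hbdd i hi) ⟨u, hu, rfl⟩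
  have hMa : ∀ i (hi : i < n), y i ≤ M i :=
    fun i hi => hMp i hi (a i) ⟨le_rfl, (hlt i hi).le⟩
  have hMb : ∀ i (hi : i < n), y (i+1) ≤ M i :=
    fun i hi => hMp i hi (a (i+1)) ⟨(hlt i hi).le, le_rfl⟩
  set lo : Fin n × Fin 2 → ℝ := fun j =>
    if j.2 = 0 then min (y j.1) (y (j.1+1)) else max (y j.1) (y (j.1+1)) with hlodef
  set hiF : Fin n × Fin 2 → ℝ := fun j => M j.1 with hhidef
  have h2ne : ¬((1 : Fin 2) = (0 : Fin 2)) := by decide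
  have hlo0 : ∀ i : Fin n, lo (i, 0) = min (y i) (y (i+1)) := by
    intro i
    rw [hlodef]
    exact if_pos rfl
  have hlo1 : ∀ i : Fin n, lo (i, 1) = max (y i) (y (i+1)) := by
    intro i
    rw [hlodef]
    exact if_neg h2ne
  have hhiv : ∀ (i : Fin n) (s : Fin 2), hiF (i, s) = M i := fun i s => rfl
  have hynn : ∀ k, 0 ≤ y k := fun k => sq_nonneg _
  have Intf2 : IntervalIntegrable (fun u => (f u)^2) volume 0 L := by
    apply ContinuousOn.intervalIntegrable
    rw [Set.uIcc_of_le hL.le]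
    exact hcont.pow 2
  have Intd2 : IntervalIntegrable (fun u => (deriv f u)^2) volume 0 L := by
    have h := IntervalIntegrable.trans_iterate (a := a) (n := n)
      (f := fun u => (deriv f u)^2) (μ := volume) (fun k hk => (pk k hk).2.1)
    rwa [ha0, haL] at h
  have hy0' : (f 0)^2 = y 0 := by rw [hydef]; simp only []; rw [ha0]
  have hyL' : (f L)^2 = y n := by rw [hydef]; simp only []; rw [haL]
  refine ⟨n, lo, hiF, ?_, Intf2, Intd2, ?_, ?_, ?_, ?_⟩
  · rintro ⟨i, s⟩
    by_cases hs : s = 0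
    · subst hs
      rw [hlo0, hhiv]
      exact ⟨le_min (hynn _) (hynn _), le_trans (min_le_left _ _) (hMa i.1 i.2)⟩
    · have hs1 : s = 1 := Fin.eq_one_of_ne_zero s hs
      subst hs1
      rw [hlo1, hhiv]
      exact ⟨le_max_of_le_left (hynn _), max_le (hMa i.1 i.2) (hMb i.1 i.2)⟩
  · -- total length bound
    have Int3 : IntervalIntegrable (fun u => |f u| * |deriv f u|) volume 0 L := by
      have h := IntervalIntegrable.trans_iterate (a := a) (n := n)
        (f := fun u => |f u| * |deriv f u|) (μ := volume) (fun k hk => (pk k hk).2.2.1)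
      rwa [ha0, haL] at h
    have hsum1 : (∑ j : Fin n × Fin 2, (hiF j - lo j))
        = ∑ i ∈ Finset.range n, ((M i - y i) + (M i - y (i+1))) := by
      rw [Fintype.sum_prod_type, ← Fin.sum_univ_eq_sum_range]
      apply Finset.sum_congr rfl
      intro i _
      simp only [Fin.sum_univ_two, hlo0, hlo1, hhiv]
      have := min_add_max (y (i : ℕ)) (y ((i : ℕ)+1))
      linarith [this]
    have hsum3 : (∑ i ∈ Finset.range n, ((M i - y i) + (M i - y (i+1))))
        ≤ ∑ i ∈ Finset.range n, ∫ u in (a i)..(a (i+1)), 2 * (|f u| * |deriv f u|) := by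
      apply Finset.sum_le_sum
      intro i hi'
      exact (pk i (Finset.mem_range.1 hi')).2.2.2
    have hsum4 : (∑ i ∈ Finset.range n, ∫ u in (a i)..(a (i+1)), 2 * (|f u| * |deriv f u|))
        = ∫ u in (0:ℝ)..L, 2 * (|f u| * |deriv f u|) := by
      have h := intervalIntegral.sum_integral_adjacent_intervals (a := a) (n := n)
        (f := fun u => 2 * (|f u| * |deriv f u|)) (μ := volume)
        (fun k hk => (pk k hk).1)
      rwa [ha0, haL] at h
    have h2B : (∫ u in (0:ℝ)..L, 2 * (|f u| * |deriv f u|))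
        = 2 * ∫ u in (0:ℝ)..L, |f u| * |deriv f u| := by
      rw [← intervalIntegral.integral_const_mul]
    set A : ℝ := ∫ u in (0:ℝ)..L, (f u)^2 with hAdef
    set B : ℝ := ∫ u in (0:ℝ)..L, |f u| * |deriv f u| with hBdef
    set C : ℝ := ∫ u in (0:ℝ)..L, (deriv f u)^2 with hCdef
    have hAnn : 0 ≤ A := intervalIntegral.integral_nonneg hL.le (fun u _ => sq_nonneg _)
    have hBnn : 0 ≤ B := intervalIntegral.integral_nonneg hL.le
      (fun u _ => mul_nonneg (abs_nonneg _) (abs_nonneg _))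
    have hkey : ∀ r : ℝ, 0 ≤ A * r^2 + (2*B) * r + C := by
      intro r
      have hInt1 : IntervalIntegrable (fun u => r^2 * (f u)^2) volume 0 L :=
        Intf2.const_mul _
      have hInt2 : IntervalIntegrable (fun u => 2*r * (|f u| * |deriv f u|)) volume 0 L :=
        Int3.const_mul _
      have hInt12 : IntervalIntegrable
          (fun u => r^2 * (f u)^2 + 2*r * (|f u| * |deriv f u|)) volume 0 L :=
        hInt1.add hInt2
      have hnn : (0:ℝ) ≤ ∫ u in (0:ℝ)..L, (r * |f u| + |deriv f u|)^2 :=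
        intervalIntegral.integral_nonneg hL.le (fun u _ => sq_nonneg _)
      have hexp : (∫ u in (0:ℝ)..L, (r * |f u| + |deriv f u|)^2)
          = A * r^2 + (2*B) * r + C := by
        have hptw : ∀ u, (r * |f u| + |deriv f u|)^2
            = (r^2 * (f u)^2 + 2*r * (|f u| * |deriv f u|)) + (deriv f u)^2 := by
          intro u
          have e1 : |f u|^2 = (f u)^2 := sq_abs _
          have e2 : |deriv f u|^2 = (deriv f u)^2 := sq_abs _
          nlinarith [e1, e2]
        rw [intervalIntegral.integral_congr (g :=
          fun u => (r^2 * (f u)^2 + 2*r * (|f u| * |deriv f u|)) + (deriv f u)^2)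
          (fun u _ => hptw u)]
        rw [intervalIntegral.integral_add hInt12 Intd2,
            intervalIntegral.integral_add hInt1 hInt2,
            intervalIntegral.integral_const_mul, intervalIntegral.integral_const_mul]
        ring
      linarith [hnn, hexp]
    have hdisc : discrim A (2*B) C ≤ 0 := by
      apply discrim_le_zero
      intro x
      have := hkey x
      nlinarith [this]
    have hBsq : B^2 ≤ A * C := by
      rw [discrim] at hdisc
      nlinarith [hdisc]
    have hBle : B ≤ Real.sqrt A * Real.sqrt C := by
      rw [← Real.sqrt_mul hAnn]
      have h1 := Real.sqrt_le_sqrt hBsq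
      rwa [Real.sqrt_sq hBnn] at h1
    calc (∑ j : Fin n × Fin 2, (hiF j - lo j))
        = ∑ i ∈ Finset.range n, ((M i - y i) + (M i - y (i+1))) := hsum1
      _ ≤ ∫ u in (0:ℝ)..L, 2 * (|f u| * |deriv f u|) := le_of_le_of_eq hsum3 hsum4
      _ = 2 * B := h2B
      _ ≤ 2 * (Real.sqrt A * Real.sqrt C) := by linarith [hBle]
  · -- counting
    intro t ht hgen htop
    have hy0 : (f 0)^2 = y 0 := by rw [hydef]; simp only []; rw [ha0]
    have hyL : (f L)^2 = y n := by rw [hydef]; simp only []; rw [haL]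
    have hyne : ∀ k, k ≤ n → y k ≠ t := by
      intro k hk
      rcases Nat.lt_or_ge k n with hkn | hkn
      · rcases le_total (y k) (y (k+1)) with h | h
        · have h0 := hgen (⟨k, hkn⟩, 0)
          rw [hlo0] at h0
          rwa [Fin.val_mk, min_eq_left h] at h0
        · have h1 := hgen (⟨k, hkn⟩, 1)
          rw [hlo1] at h1
          rwa [Fin.val_mk, max_eq_left h] at h1
      · have hkn' : k = n := le_antisymm hk hkn
        rw [hkn']
        have hn1 : n - 1 < n := by omega
        have hsucc : n - 1 + 1 = n := by omega
        rcases le_total (y (n-1)) (y n) with h | h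
        · have h1 := hgen (⟨n-1, hn1⟩, 1)
          rw [hlo1] at h1
          rwa [Fin.val_mk, hsucc, max_eq_right h] at h1
        · have h0 := hgen (⟨n-1, hn1⟩, 0)
          rw [hlo0] at h0
          rwa [Fin.val_mk, hsucc, min_eq_right h] at h0
    have hylt : ∀ k, k ≤ n → ¬(t < y k) → y k < t :=
      fun k hk h => lt_of_le_of_ne (not_lt.1 h) (hyne k hk)
    set Flt := Finset.univ.filter (fun j : Fin n × Fin 2 => lo j < t ∧ t < hiF j) with hFltdef
    have hMex : ∃ i, ∃ hi : i < n, t < M i := by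
      obtain ⟨u, hu, hut⟩ := htop
      have hu' : u ∈ Set.Icc (a 0) (a n) := by rw [ha0, haL]; exact hu
      obtain ⟨i, hin, hmem'⟩ := mem_piece_of_mem_Icc hn (fun k hk => (hlt k hk).le) hu'
      exact ⟨i, hin, lt_of_lt_of_le hut (hMp i hin u hmem')⟩
    by_cases hnode : ∃ k, k ≤ n ∧ t < y k
    · -- some node above t
      obtain ⟨kw, hkw, hkwt⟩ := hnode
      set T := (Finset.range (n+1)).filter (fun k => t < y k) with hTdef
      have hTne : T.Nonempty := ⟨kw, by
        rw [hTdef, Finset.mem_filter, Finset.mem_range]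
        exact ⟨by omega, hkwt⟩⟩
      set k₀ := T.min' hTne with hk₀def
      set k₁ := T.max' hTne with hk₁def
      have hk₀T : k₀ ∈ T := T.min'_mem hTne
      have hk₁T : k₁ ∈ T := T.max'_mem hTne
      have hk₀n : k₀ ≤ n := by
        have := (Finset.mem_filter.1 hk₀T).1
        rw [Finset.mem_range] at this
        omega
      have hk₁n : k₁ ≤ n := by
        have := (Finset.mem_filter.1 hk₁T).1
        rw [Finset.mem_range] at this
        omega
      have hk₀y : t < y k₀ := (Finset.mem_filter.1 hk₀T).2
      have hk₁y : t < y k₁ := (Finset.mem_filter.1 hk₁T).2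
      have hk01 : k₀ ≤ k₁ := Finset.min'_le _ _ hk₁T
      have hE1 : (f 0)^2 < t → ∃ i₁ : Fin n, (i₁, 0) ∈ Flt ∧ (i₁ : ℕ) + 1 = k₀ := by
        intro h0
        rw [hy0] at h0
        have hk₀0 : k₀ ≠ 0 := fun h => absurd hk₀y (by rw [h]; exact not_lt.2 h0.le)
        have hi₁ : k₀ - 1 < n := by omega
        have hsucc : k₀ - 1 + 1 = k₀ := by omega
        have hyi₁ : y (k₀ - 1) < t := by
          apply hylt _ (by omega)
          intro hcon
          have : k₀ - 1 ∈ T := by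
            rw [hTdef, Finset.mem_filter, Finset.mem_range]
            exact ⟨by omega, hcon⟩
          have := Finset.min'_le _ _ this
          omega
        refine ⟨⟨k₀ - 1, hi₁⟩, ?_, hsucc⟩
        rw [hFltdef, Finset.mem_filter]
        refine ⟨Finset.mem_univ _, ?_, ?_⟩
        · rw [hlo0, Fin.val_mk]
          exact lt_of_le_of_lt (min_le_left _ _) hyi₁
        · rw [hhiv]
          refine lt_of_lt_of_le ?_ (hMb _ hi₁)
          rw [Fin.val_mk, hsucc]
          exact hk₀y
      have hE2 : (f L)^2 < t → ∃ i₂ : Fin n, (i₂, 0) ∈ Flt ∧ (i₂ : ℕ) = k₁ := by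
        intro hLL
        rw [hyL] at hLL
        have hk₁nn : k₁ ≠ n := fun h => absurd hk₁y (by rw [h]; exact not_lt.2 hLL.le)
        have hi₂ : k₁ < n := by omega
        have hyk₁1 : y (k₁ + 1) < t := by
          apply hylt _ (by omega)
          intro hcon
          have : k₁ + 1 ∈ T := by
            rw [hTdef, Finset.mem_filter, Finset.mem_range]
            exact ⟨by omega, hcon⟩
          have := Finset.le_max' _ _ this
          omega
        refine ⟨⟨k₁, hi₂⟩, ?_, rfl⟩
        rw [hFltdef, Finset.mem_filter]
        refine ⟨Finset.mem_univ _, ?_, ?_⟩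
        · rw [hlo0, Fin.val_mk]
          exact lt_of_le_of_lt (min_le_right _ _) hyk₁1
        · rw [hhiv]
          exact lt_of_lt_of_le hk₁y (by rw [Fin.val_mk] at *; exact hMa _ hi₂)
      by_cases h0 : (f 0)^2 < t <;> by_cases hLL : (f L)^2 < t
      · obtain ⟨i₁, hi₁F, hi₁v⟩ := hE1 h0
        obtain ⟨i₂, hi₂F, hi₂v⟩ := hE2 hLL
        have hne12 : (i₁, (0 : Fin 2)) ≠ (i₂, 0) := by
          intro h
          have : i₁ = i₂ := (Prod.mk.injEq _ _ _ _ ▸ h).1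
          rw [this] at hi₁v
          omega
        have h2 : 1 < Flt.card := Finset.one_lt_card.2 ⟨_, hi₁F, _, hi₂F, hne12⟩
        simp only [if_pos h0, if_pos hLL]
        omega
      · obtain ⟨i₁, hi₁F, _⟩ := hE1 h0
        have h1 : 0 < Flt.card := Finset.card_pos.2 ⟨_, hi₁F⟩
        simp only [if_pos h0, if_neg hLL]
        omega
      · obtain ⟨i₂, hi₂F, _⟩ := hE2 hLL
        have h1 : 0 < Flt.card := Finset.card_pos.2 ⟨_, hi₂F⟩
        simp only [if_neg h0, if_pos hLL]
        omega
      · simp only [if_neg h0, if_neg hLL]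
        omega
    · -- all nodes below t
      have hall : ∀ k, k ≤ n → y k < t := fun k hk => hylt k hk (fun h => hnode ⟨k, hk, h⟩)
      obtain ⟨i, hin, hMi⟩ := hMex
      have hj1 : ((⟨i, hin⟩ : Fin n), (0 : Fin 2)) ∈ Flt := by
        rw [hFltdef, Finset.mem_filter]
        refine ⟨Finset.mem_univ _, ?_, ?_⟩
        · rw [hlo0, Fin.val_mk]
          exact lt_of_le_of_lt (min_le_left _ _) (hall i (by omega))
        · rw [hhiv, Fin.val_mk]
          exact hMi
      have hj2 : ((⟨i, hin⟩ : Fin n), (1 : Fin 2)) ∈ Flt := by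
        rw [hFltdef, Finset.mem_filter]
        refine ⟨Finset.mem_univ _, ?_, ?_⟩
        · rw [hlo1, Fin.val_mk]
          exact max_lt (hall i (by omega)) (hall (i+1) (by omega))
        · rw [hhiv, Fin.val_mk]
          exact hMi
      have hne12 : ((⟨i, hin⟩ : Fin n), (0 : Fin 2)) ≠ (⟨i, hin⟩, 1) := by
        intro h
        have := (Prod.mk.injEq _ _ _ _ ▸ h).2
        exact absurd this (by decide)
      have h2 : 1 < Flt.card := Finset.one_lt_card.2 ⟨_, hj1, _, hj2, hne12⟩
      have hle : ((if (f 0)^2 < t then 1 else 0) + (if (f L)^2 < t then 1 else 0) : ℕ) ≤ 2 := by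
        split_ifs <;> omega
      omega
  · -- (f 0)^2 is a lo-value
    rcases le_total (y 0) (y 1) with h | h
    · exact ⟨(⟨0, hn⟩, 0), by rw [hlo0, Fin.val_mk, min_eq_left h, hy0']⟩
    · exact ⟨(⟨0, hn⟩, 1), by rw [hlo1, Fin.val_mk, max_eq_left h, hy0']⟩
  · -- (f L)^2 is a lo-value
    have hn1 : n - 1 < n := by omega
    have hsucc : n - 1 + 1 = n := by omega
    rcases le_total (y (n-1)) (y n) with h | h
    · exact ⟨(⟨n-1, hn1⟩, 1), by rw [hlo1, Fin.val_mk, hsucc, max_eq_right h, hyL']⟩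
    · exact ⟨(⟨n-1, hn1⟩, 0), by rw [hlo0, Fin.val_mk, hsucc, min_eq_right h, hyL']⟩

end EdgeMain
noncomputable section TFunAux

open MeasureTheory

namespace MetricGraph

variable {Γ : MetricGraph}

lemma TestFun.zero_off_supp (φ : TestFun Γ) {e : Γ.E} (he : e ∉ φ.finSupp.toFinset) :
    ∀ x ∈ Set.Icc 0 (Γ.len e), φ.f e x = 0 := by
  intro x hx
  by_contra h
  exact he (φ.finSupp.mem_toFinset.2 ⟨x, hx, h⟩)

lemma TestFun.normSq_eq (φ : TestFun Γ) :
    φ.normSq = ∑ e ∈ φ.finSupp.toFinset, ∫ x in (0:ℝ)..Γ.len e, (φ.f e x)^2 := by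
  apply finsum_eq_finset_sum_of_support_subset
  intro e he
  rw [Function.mem_support] at he
  by_contra hc
  apply he
  have h0 : Set.EqOn (fun x => (φ.f e x)^2) (fun _ => (0:ℝ)) (Set.uIcc 0 (Γ.len e)) := by
    intro x hx
    rw [Set.uIcc_of_le (Γ.len_pos e).le] at hx
    simp [φ.zero_off_supp (by simpa using hc) x hx]
  rw [intervalIntegral.integral_congr h0]
  simp

lemma TestFun.energySq_eq (φ : TestFun Γ) :
    φ.energySq = ∑ e ∈ φ.finSupp.toFinset, ∫ x in (0:ℝ)..Γ.len e, (deriv (φ.f e) x)^2 := by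
  apply finsum_eq_finset_sum_of_support_subset
  intro e he
  rw [Function.mem_support] at he
  by_contra hc
  apply he
  have hL := Γ.len_pos e
  have hd : ∀ x ∈ Set.Ioo 0 (Γ.len e), deriv (φ.f e) x = 0 := by
    intro x hx
    have hev : φ.f e =ᶠ[nhds x] (fun _ => (0:ℝ)) := by
      apply Filter.eventuallyEq_of_mem (Icc_mem_nhds hx.1 hx.2)
      intro u hu
      exact φ.zero_off_supp (by simpa using hc) u hu
    rw [hev.deriv_eq]
    simp
  have h0 : ∫ x in (0:ℝ)..Γ.len e, (deriv (φ.f e) x)^2 = ∫ x in (0:ℝ)..Γ.len e, (0:ℝ) := by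
    apply intervalIntegral.integral_congr_ae
    have hsub : {x : ℝ | ¬(x ∈ Set.uIoc 0 (Γ.len e) → (deriv (φ.f e) x)^2 = (fun _ => (0:ℝ)) x)}
        ⊆ {Γ.len e} := by
      intro x hx
      simp only [Set.mem_setOf_eq, _root_.not_imp] at hx
      obtain ⟨hx1, hx2⟩ := hx
      rw [Set.uIoc_of_le hL.le] at hx1
      by_contra hxe
      apply hx2
      rw [hd x ⟨hx1.1, lt_of_le_of_ne hx1.2 hxe⟩]
      simp
    rw [Filter.eventually_iff, MeasureTheory.mem_ae_iff]
    exact measure_mono_null (by exact_mod_cast hsub) (measure_singleton _)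
  rw [h0]
  simp

lemma TestFun.normSq_pos (φ : TestFun Γ) (h : φ.Nonzero) : 0 < φ.normSq := by
  obtain ⟨e₀, x₀, hx₀, hf₀⟩ := h
  rw [φ.normSq_eq]
  have he₀S : e₀ ∈ φ.finSupp.toFinset := φ.finSupp.mem_toFinset.2 ⟨x₀, hx₀, hf₀⟩
  apply Finset.sum_pos'
  · intro e _
    exact intervalIntegral.integral_nonneg (Γ.len_pos e).le (fun x _ => sq_nonneg _)
  refine ⟨e₀, he₀S, ?_⟩
  set L := Γ.len e₀ with hLdef
  have hL : 0 < L := Γ.len_pos e₀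
  have hcont : ContinuousOn (φ.f e₀) (Set.Icc 0 L) := (φ.piecewise e₀).1
  have Int : IntervalIntegrable (fun x => (φ.f e₀ x)^2) volume 0 L := by
    apply ContinuousOn.intervalIntegrable
    rw [Set.uIcc_of_le hL.le]
    exact hcont.pow 2
  rw [intervalIntegral.integral_pos_iff_support_of_nonneg_ae
    (Filter.Eventually.of_forall (fun x => sq_nonneg _)) Int]
  refine ⟨hL, ?_⟩
  set ε := |φ.f e₀ x₀| / 2 with hεdef
  have hεpos : 0 < ε := by
    rw [hεdef]
    have := abs_pos.2 hf₀
    linarith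
  have hcw : ContinuousWithinAt (φ.f e₀) (Set.Icc 0 L) x₀ := hcont x₀ hx₀
  have hO : IsOpen {y : ℝ | ε < |y|} := isOpen_lt continuous_const continuous_abs
  have hmem : φ.f e₀ x₀ ∈ {y : ℝ | ε < |y|} := by
    rw [Set.mem_setOf_eq, hεdef]
    have := abs_pos.2 hf₀
    linarith
  have hev : ∀ᶠ x in nhdsWithin x₀ (Set.Icc 0 L), φ.f e₀ x ∈ {y : ℝ | ε < |y|} :=
    hcw (hO.mem_nhds hmem)
  have hev' : {x : ℝ | φ.f e₀ x ∈ {y : ℝ | ε < |y|}} ∈ nhdsWithin x₀ (Set.Icc 0 L) := hev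
  obtain ⟨V, hVo, hxV, hVsub⟩ := mem_nhdsWithin.1 hev'
  obtain ⟨δ, hδ, hball⟩ := Metric.isOpen_iff.1 hVo x₀ hxV
  rw [Real.ball_eq_Ioo] at hball
  set p := max (x₀ - δ) 0 with hpdef
  set q := min (x₀ + δ) L with hqdef
  have hx₀1 : 0 ≤ x₀ := hx₀.1
  have hx₀2 : x₀ ≤ L := hx₀.2
  have hpq : p < q := by
    rw [hpdef, hqdef]
    apply max_lt
    · exact lt_min (by linarith) (by linarith)
    · exact lt_min (by linarith) hL
  have hsub2 : Set.Ioo p q ⊆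
      Function.support (fun x => (φ.f e₀ x)^2) ∩ Set.Ioc 0 L := by
    intro x hx
    have hx1 : x ∈ Set.Ioo (x₀ - δ) (x₀ + δ) :=
      ⟨lt_of_le_of_lt (le_max_left _ _) hx.1, lt_of_lt_of_le hx.2 (min_le_left _ _)⟩
    have hx2 : x ∈ Set.Icc 0 L :=
      ⟨(le_max_right (x₀ - δ) 0).trans hx.1.le, hx.2.le.trans (min_le_right _ _)⟩
    have hxO : φ.f e₀ x ∈ {y : ℝ | ε < |y|} := hVsub ⟨hball hx1, hx2⟩
    rw [Set.mem_setOf_eq] at hxO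
    constructor
    · apply pow_ne_zero
      exact abs_pos.1 (lt_trans hεpos hxO)
    · exact ⟨lt_of_le_of_lt (le_max_right _ _) hx.1, hx.2.le.trans (min_le_right _ _)⟩
  calc (0:ℝ≥0∞) < volume (Set.Ioo p q) := by
        rw [Real.volume_Ioo]
        exact ENNReal.ofReal_pos.2 (by linarith)
    _ ≤ volume (Function.support (fun x => (φ.f e₀ x)^2) ∩ Set.Ioc 0 L) :=
        measure_mono hsub2

lemma exists_nonzero_testfun (Γ : MetricGraph) : ∃ φ : TestFun Γ, φ.Nonzero := by
  classical
  have hne : Nonempty Γ.E := @Infinite.nonempty _ Γ.infE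
  obtain ⟨e₀⟩ := hne
  set L := Γ.len e₀ with hLdef
  have hL : 0 < L := Γ.len_pos e₀
  have pc1 : ∀ (c : ℝ) (L' : ℝ), 0 < L' → PiecewiseC1 (fun x => c * (x * (L' - x))) L' := by
    intro c L' hL'
    constructor
    · apply Continuous.continuousOn
      continuity
    refine ⟨1, ![0, L'], rfl, rfl, ?_, ?_⟩
    · intro i j hij
      rw [Fin.lt_def] at hij
      have hi2 := i.isLt
      have hj2 := j.isLt
      have hi0 : (i : ℕ) = 0 := by omega
      have hj1 : (j : ℕ) = 1 := by omega
      have hieq : i = 0 := Fin.ext (by rw [hi0]; rfl)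
      have hjeq : j = 1 := Fin.ext (by rw [hj1]; rfl)
      subst hieq
      subst hjeq
      simp only [Matrix.cons_val_zero, Matrix.cons_val_one, Matrix.head_cons]
      exact hL'
    · intro i
      have hi0 : i = 0 := Subsingleton.elim _ _
      subst hi0
      refine ⟨fun u => c * (L' - 2*u), ?_, ?_⟩
      · apply Continuous.continuousOn
        continuity
      · intro u _
        have h1 : HasDerivAt (fun x : ℝ => c * (x * (L' - x))) (c * (L' - 2*u)) u := by
          have h2 : HasDerivAt (fun x : ℝ => x * (L' - x))
              (1 * (L' - u) + u * (0 - 1)) u :=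
            (hasDerivAt_id u).mul ((hasDerivAt_const u L').sub (hasDerivAt_id u))
          have h3 := h2.const_mul c
          rw [show c * (L' - 2*u) = c * (1 * (L' - u) + u * (0 - 1)) by ring]
          exact h3
        exact h1.hasDerivWithinAt
  set ff : Γ.E → ℝ → ℝ := fun e x => if e = e₀ then x * (Γ.len e₀ - x) else 0 with hffdef
  have hffe₀ : ff e₀ = fun x => x * (Γ.len e₀ - x) := by
    funext x
    rw [hffdef]
    simp
  have hffne : ∀ e, e ≠ e₀ → ff e = fun _ => 0 := by
    intro e he
    funext x
    rw [hffdef]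
    simp [he]
  have hpw : ∀ e, PiecewiseC1 (ff e) (Γ.len e) := by
    intro e
    by_cases he : e = e₀
    · rw [he, hffe₀]
      have h := pc1 1 (Γ.len e₀) (Γ.len_pos e₀)
      have heq : (fun x => (1:ℝ) * (x * (Γ.len e₀ - x))) = fun x => x * (Γ.len e₀ - x) := by
        funext x; ring
      rwa [heq] at h
    · rw [hffne e he]
      have h := pc1 0 (Γ.len e) (Γ.len_pos e)
      have heq : (fun x => (0:ℝ) * (x * (Γ.len e - x))) = fun _ => (0:ℝ) := by
        funext x; ring
      rwa [heq] at h
  have hend : ∀ (e : Γ.E) (v : Γ.V), Γ.endVal ff e v = 0 := by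
    intro e v
    unfold endVal
    have h0 : ff e 0 = 0 := by
      rw [hffdef]
      by_cases he : e = e₀ <;> simp [he]
    have h1 : ff e (Γ.len e) = 0 := by
      rw [hffdef]
      by_cases he : e = e₀
      · subst he; simp
      · simp [he]
    split_ifs
    · exact h0
    · exact h1
  refine ⟨⟨ff, hpw, ?_, ?_⟩, ?_⟩
  · intro e e' v _ _
    rw [hend, hend]
  · apply Set.Finite.subset (Set.finite_singleton e₀)
    rintro e ⟨x, _, hne⟩
    rw [Set.mem_singleton_iff]
    by_contra he
    exact hne (by rw [hffne e he])
  · refine ⟨e₀, L/2, ⟨by linarith, by rw [← hLdef]; linarith⟩, ?_⟩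
    show ff e₀ (L/2) ≠ 0
    have hval : ff e₀ (L/2) = L/2 * (L - L/2) := by
      rw [hffe₀]
    rw [hval]
    have hpos : 0 < L/2 * (L - L/2) := by nlinarith
    exact hpos.ne'

end MetricGraph

end TFunAux
section MainAux

open MeasureTheory

/-- helper: counting over a pair -/
lemma card_filter_pair {α : Type*} [DecidableEq α] (u w : α) (hne : u ≠ w)
    (Q : α → Prop) [DecidablePred Q] :
    (({u, w} : Finset α).filter Q).card
      = (if Q u then 1 else 0) + (if Q w then 1 else 0) := by
  rw [Finset.filter_insert, Finset.filter_singleton]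
  split_ifs with h1 h2 h2
  · rw [Finset.card_insert_of_notMem (by simp [hne]), Finset.card_singleton]
  · rw [Finset.card_insert_of_notMem (by simp), Finset.card_empty]
  · rw [Finset.card_singleton]
  · rw [Finset.card_empty]

end MainAux

/-- **Theorem 3.2 (Cheeger-type estimate for quantum graphs).**
For every nonzero test function `f` on the metric graph `G` one has
`α(G)²·‖f‖² ≤ 4·‖f′‖²`; consequently `λ₀(H) ≥ α(G)²/4`. -/
theorem cheeger_estimate_quantum_graph (Γ : MetricGraph) :
    (∀ φ : MetricGraph.TestFun Γ, φ.Nonzero →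
      Γ.alpha ^ 2 * φ.normSq ≤ 4 * φ.energySq) ∧
    Γ.alpha ^ 2 / 4 ≤ Γ.lambda0 := by
  classical
  have part1 : ∀ φ : MetricGraph.TestFun Γ, φ.Nonzero →
      Γ.alpha ^ 2 * φ.normSq ≤ 4 * φ.energySq := by
    intro φ hnz
    set S := φ.finSupp.toFinset with hSdef
    have hpkg := fun e : Γ.E => edge_main (φ.f e) (Γ.len e) (Γ.len_pos e) (φ.piecewise e)
    choose n lo hi hbnds hIf2 hId2 hlen hcount hse0 hseL using hpkg
    set A : Γ.E → ℝ := fun e => ∫ x in (0:ℝ)..Γ.len e, (φ.f e x)^2 with hAdef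
    set C : Γ.E → ℝ := fun e => ∫ x in (0:ℝ)..Γ.len e, (deriv (φ.f e) x)^2 with hCdef
    have hAnn : ∀ e, 0 ≤ A e := fun e =>
      intervalIntegral.integral_nonneg (Γ.len_pos e).le (fun x _ => sq_nonneg _)
    have hCnn : ∀ e, 0 ≤ C e := fun e =>
      intervalIntegral.integral_nonneg (Γ.len_pos e).le (fun x _ => sq_nonneg _)
    have hNormS : φ.normSq = ∑ e ∈ S, A e := φ.normSq_eq
    have hEnerS : φ.energySq = ∑ e ∈ S, C e := φ.energySq_eq
    have hNpos : 0 < φ.normSq := φ.normSq_pos hnz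
    have halpha0 : 0 ≤ Γ.alpha := Γ.alpha_nonneg
    set mfun : ℝ → ℝ≥0∞ := fun t =>
      ∑ e ∈ S, volume {x : ℝ | x ∈ Set.Ioc 0 (Γ.len e) ∧ t < (φ.f e x)^2} with hmdef
    set cnt : Γ.E → ℝ → ℕ := fun e t =>
      (Finset.univ.filter fun j : Fin (n e) × Fin 2 => lo e j < t ∧ t < hi e j).card
      with hcntdef
    set Nfun : ℝ → ℝ≥0∞ := fun t =>
      ∑ e ∈ S, ∑ j : Fin (n e) × Fin 2,
        (Set.Ioo (lo e j) (hi e j)).indicator (fun _ => (1:ℝ≥0∞)) t with hNdef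
    -- Step I: layer cake
    have hlayer : ∀ e : Γ.E,
        (∫⁻ t in Set.Ioi (0:ℝ), volume {x : ℝ | x ∈ Set.Ioc 0 (Γ.len e) ∧ t < (φ.f e x)^2})
          = ENNReal.ofReal (A e) := by
      intro e
      have hmeasf : AEMeasurable (fun x => (φ.f e x)^2)
          (volume.restrict (Set.Ioc 0 (Γ.len e))) := by
        have h1 : ContinuousOn (fun x => (φ.f e x)^2) (Set.Icc 0 (Γ.len e)) :=
          (φ.piecewise e).1.pow 2
        exact (h1.mono Set.Ioc_subset_Icc_self).aemeasurable measurableSet_Ioc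
      have h1 := MeasureTheory.lintegral_eq_lintegral_meas_lt
        (volume.restrict (Set.Ioc 0 (Γ.len e)))
        (Filter.Eventually.of_forall (fun x => sq_nonneg (φ.f e x))) hmeasf
      have h2 : ∀ t : ℝ, (volume.restrict (Set.Ioc 0 (Γ.len e))) {a : ℝ | t < (φ.f e a)^2}
          = volume {x : ℝ | x ∈ Set.Ioc 0 (Γ.len e) ∧ t < (φ.f e x)^2} := by
        intro t
        rw [MeasureTheory.Measure.restrict_apply' measurableSet_Ioc]
        congr 1
        ext x
        simp only [Set.mem_inter_iff, Set.mem_setOf_eq]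
        exact and_comm
      have h3 : ENNReal.ofReal (A e)
          = ∫⁻ x in Set.Ioc 0 (Γ.len e), ENNReal.ofReal ((φ.f e x)^2) := by
        rw [hAdef]
        simp only []
        rw [intervalIntegral.integral_of_le (Γ.len_pos e).le]
        apply MeasureTheory.ofReal_integral_eq_lintegral_ofReal
        · exact (intervalIntegrable_iff_integrableOn_Ioc_of_le (Γ.len_pos e).le).1 (hIf2 e)
        · exact Filter.Eventually.of_forall (fun x => sq_nonneg _)
      rw [h3, h1]
      exact MeasureTheory.lintegral_congr (fun t => (h2 t).symm)
    have hmeasm : ∀ e : Γ.E, Measurable (fun t : ℝ =>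
        volume {x : ℝ | x ∈ Set.Ioc 0 (Γ.len e) ∧ t < (φ.f e x)^2}) := by
      intro e
      apply Antitone.measurable
      intro t1 t2 h12
      apply measure_mono
      intro x hx
      exact ⟨hx.1, lt_of_le_of_lt h12 hx.2⟩
    have hStepI : ∫⁻ t in Set.Ioi (0:ℝ), mfun t = ENNReal.ofReal (φ.normSq) := by
      rw [hmdef]
      simp only []
      rw [MeasureTheory.lintegral_finset_sum _ (fun e _ => hmeasm e)]
      rw [Finset.sum_congr rfl (fun e _ => hlayer e)]
      rw [hNormS, ENNReal.ofReal_sum_of_nonneg (fun e _ => hAnn e)]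
    -- Step II: length of the level intervals
    have hmeasN : ∀ (e : Γ.E) (j : Fin (n e) × Fin 2),
        Measurable ((Set.Ioo (lo e j) (hi e j)).indicator (fun _ => (1:ℝ≥0∞))) :=
      fun e j => measurable_const.indicator measurableSet_Ioo
    have hindint : ∀ (e : Γ.E) (j : Fin (n e) × Fin 2),
        (∫⁻ t in Set.Ioi (0:ℝ),
            (Set.Ioo (lo e j) (hi e j)).indicator (fun _ => (1:ℝ≥0∞)) t)
          = ENNReal.ofReal (hi e j - lo e j) := by
      intro e j
      rw [MeasureTheory.lintegral_indicator measurableSet_Ioo]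
      rw [MeasureTheory.Measure.restrict_restrict measurableSet_Ioo]
      rw [MeasureTheory.setLIntegral_one]
      have hsub : Set.Ioo (lo e j) (hi e j) ⊆ Set.Ioi 0 :=
        fun x hx => lt_of_le_of_lt (hbnds e j).1 hx.1
      rw [Set.inter_eq_self_of_subset_left hsub]
      exact Real.volume_Ioo
    have hStepII : (∫⁻ t in Set.Ioi (0:ℝ), Nfun t)
        ≤ ENNReal.ofReal (∑ e ∈ S, 2 * (Real.sqrt (A e) * Real.sqrt (C e))) := by
      rw [hNdef]
      simp only []
      rw [MeasureTheory.lintegral_finset_sum _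
        (fun e _ => Finset.measurable_sum _ (fun j _ => hmeasN e j))]
      have h1 : ∀ e ∈ S,
          (∫⁻ t in Set.Ioi (0:ℝ), ∑ j : Fin (n e) × Fin 2,
            (Set.Ioo (lo e j) (hi e j)).indicator (fun _ => (1:ℝ≥0∞)) t)
          ≤ ENNReal.ofReal (2 * (Real.sqrt (A e) * Real.sqrt (C e))) := by
        intro e _
        rw [MeasureTheory.lintegral_finset_sum _ (fun j _ => hmeasN e j)]
        rw [Finset.sum_congr rfl (fun j _ => hindint e j)]
        rw [← ENNReal.ofReal_sum_of_nonneg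
          (fun j _ => by linarith [(hbnds e j).2])]
        exact ENNReal.ofReal_le_ofReal (hlen e)
      calc (∑ e ∈ S, ∫⁻ t in Set.Ioi (0:ℝ), ∑ j : Fin (n e) × Fin 2,
              (Set.Ioo (lo e j) (hi e j)).indicator (fun _ => (1:ℝ≥0∞)) t)
          ≤ ∑ e ∈ S, ENNReal.ofReal (2 * (Real.sqrt (A e) * Real.sqrt (C e))) :=
            Finset.sum_le_sum h1
        _ = ENNReal.ofReal (∑ e ∈ S, 2 * (Real.sqrt (A e) * Real.sqrt (C e))) :=
            (ENNReal.ofReal_sum_of_nonneg (fun e _ => by positivity)).symm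
    -- bad level values
    set Bad : Set ℝ := ⋃ e ∈ (S : Set Γ.E), Set.range (lo e) with hBaddef
    have hBadfin : Bad.Finite :=
      Set.Finite.biUnion S.finite_toSet (fun e _ => Set.finite_range _)
    -- Step III: pointwise coarea inequality
    have key : ∀ t : ℝ, 0 < t → t ∉ Bad → ENNReal.ofReal Γ.alpha * mfun t ≤ Nfun t := by
      intro t ht htB
      have hgen : ∀ e ∈ S, ∀ j, lo e j ≠ t := by
        intro e he j hj
        exact htB (Set.mem_biUnion he ⟨j, hj⟩)
      set Ft := S.filter (fun e => ∃ x ∈ Set.Icc 0 (Γ.len e), t < (φ.f e x)^2) with hFtdef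
      have hvol0 : ∀ e, e ∉ Ft → e ∈ S →
          volume {x : ℝ | x ∈ Set.Ioc 0 (Γ.len e) ∧ t < (φ.f e x)^2} = 0 := by
        intro e heF he
        have hempty : {x : ℝ | x ∈ Set.Ioc 0 (Γ.len e) ∧ t < (φ.f e x)^2} = (∅ : Set ℝ) := by
          rw [Set.eq_empty_iff_forall_notMem]
          intro x hx
          apply heF
          rw [hFtdef, Finset.mem_filter]
          exact ⟨he, x, ⟨hx.1.1.le, hx.1.2⟩, hx.2⟩
        rw [hempty]
        exact measure_empty
      rcases Finset.eq_empty_or_nonempty Ft with hFte | hFtne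
      · have hm0 : mfun t = 0 := by
          rw [hmdef]
          simp only []
          apply Finset.sum_eq_zero
          intro e he
          exact hvol0 e (by rw [hFte]; exact Finset.notMem_empty e) he
        rw [hm0, mul_zero]
        exact zero_le
      · have hFtS : Ft ⊆ S := Finset.filter_subset _ _
        -- measure bound: mfun t ≤ mes Ft
        have hmlt : mfun t ≤ ENNReal.ofReal (Γ.mes Ft) := by
          rw [hmdef]
          simp only []
          have hstep : ∀ e ∈ S,
              volume {x : ℝ | x ∈ Set.Ioc 0 (Γ.len e) ∧ t < (φ.f e x)^2}
                ≤ (if e ∈ Ft then ENNReal.ofReal (Γ.len e) else 0) := by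
            intro e he
            by_cases heF : e ∈ Ft
            · rw [if_pos heF]
              calc volume {x : ℝ | x ∈ Set.Ioc 0 (Γ.len e) ∧ t < (φ.f e x)^2}
                  ≤ volume (Set.Ioc 0 (Γ.len e)) := measure_mono (fun x hx => hx.1)
                _ = ENNReal.ofReal (Γ.len e) := by rw [Real.volume_Ioc, sub_zero]
            · rw [if_neg heF, hvol0 e heF he]
          calc (∑ e ∈ S, volume {x : ℝ | x ∈ Set.Ioc 0 (Γ.len e) ∧ t < (φ.f e x)^2})
              ≤ ∑ e ∈ S, (if e ∈ Ft then ENNReal.ofReal (Γ.len e) else 0) :=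
                Finset.sum_le_sum hstep
            _ = ∑ e ∈ S ∩ Ft, ENNReal.ofReal (Γ.len e) := Finset.sum_ite_mem _ _ _
            _ = ∑ e ∈ Ft, ENNReal.ofReal (Γ.len e) := by
                rw [Finset.inter_eq_right.2 hFtS]
            _ = ENNReal.ofReal (Γ.mes Ft) := by
                rw [MetricGraph.mes, ENNReal.ofReal_sum_of_nonneg
                  (fun e _ => (Γ.len_pos e).le)]
        have hmfin : mfun t ≠ ⊤ := (lt_of_le_of_lt hmlt ENNReal.ofReal_lt_top).ne
        have hcomb : Γ.alpha * Γ.mes Ft ≤ Γ.degBdry Ft := Γ.alpha_mul_mes_le Ft hFtne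
        -- boundary endpoint values are below t
        have hbdryval : ∀ v ∈ Γ.bdry Ft, ∀ e ∈ Ft, e ∈ Γ.star v →
            (Γ.endVal φ.f e v)^2 < t := by
          intro v hv e heFt hestar
          have hv' := Finset.mem_filter.1 hv
          obtain ⟨e', he'star, he'F⟩ : ∃ e', e' ∈ Γ.star v ∧ e' ∉ Ft := by
            by_contra hcon
            push_neg at hcon
            have hsub : (Γ.locfin v).toFinset
                ⊆ Ft.filter (fun e'' => (Γ.ends e'').1 = v ∨ (Γ.ends e'').2 = v) := by
              intro e'' he''
              rw [Set.Finite.mem_toFinset] at he''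
              rw [Finset.mem_filter]
              exact ⟨hcon e'' he'', he''⟩
            have hle := Finset.card_le_card hsub
            have hlt2 := hv'.2
            rw [MetricGraph.degIn, MetricGraph.degree] at hlt2
            omega
          have he'val : (Γ.endVal φ.f e' v)^2 < t := by
            by_cases he'S : e' ∈ S
            · have hnotop : ∀ x ∈ Set.Icc 0 (Γ.len e'), ¬ t < (φ.f e' x)^2 := by
                intro x hx hc
                apply he'F
                rw [hFtdef, Finset.mem_filter]
                exact ⟨he'S, x, hx, hc⟩
              have hneq : (Γ.endVal φ.f e' v)^2 ≠ t := by
                rw [MetricGraph.endVal]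
                split_ifs
                · obtain ⟨j, hj⟩ := hse0 e'
                  intro hc
                  exact hgen e' he'S j (by rw [hj, hc])
                · obtain ⟨j, hj⟩ := hseL e'
                  intro hc
                  exact hgen e' he'S j (by rw [hj, hc])
              have hle2 : (Γ.endVal φ.f e' v)^2 ≤ t := by
                rw [MetricGraph.endVal]
                split_ifs
                · exact not_lt.1 (hnotop 0 ⟨le_rfl, (Γ.len_pos e').le⟩)
                · exact not_lt.1 (hnotop (Γ.len e') ⟨(Γ.len_pos e').le, le_rfl⟩)
              exact lt_of_le_of_ne hle2 hneq
            · have h0 : Γ.endVal φ.f e' v = 0 := by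
                rw [MetricGraph.endVal]
                split_ifs
                · exact φ.zero_off_supp he'S 0 ⟨le_rfl, (Γ.len_pos e').le⟩
                · exact φ.zero_off_supp he'S (Γ.len e') ⟨(Γ.len_pos e').le, le_rfl⟩
              rw [h0]
              simpa using ht
          rw [φ.vertexCont e e' v hestar he'star]
          exact he'val
        -- per-edge crossing count
        have hcnt_e : ∀ e ∈ Ft,
            ((Γ.bdry Ft).filter
              (fun v => (Γ.ends e).1 = v ∨ (Γ.ends e).2 = v)).card ≤ cnt e t := by
          intro e heFt
          have huw : (Γ.ends e).1 ≠ (Γ.ends e).2 := Γ.no_loops e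
          have hsub : (Γ.bdry Ft).filter
              (fun v => (Γ.ends e).1 = v ∨ (Γ.ends e).2 = v)
              ⊆ ({(Γ.ends e).1, (Γ.ends e).2} : Finset Γ.V).filter
                  (fun v => v ∈ Γ.bdry Ft) := by
            intro v hv
            rw [Finset.mem_filter] at hv ⊢
            rcases hv.2 with h | h
            · exact ⟨by rw [Finset.mem_insert]; exact Or.inl h.symm, hv.1⟩
            · exact ⟨by rw [Finset.mem_insert, Finset.mem_singleton]
                        exact Or.inr h.symm, hv.1⟩
          have hcard := Finset.card_le_card hsub
          have hpair := card_filter_pair (Γ.ends e).1 (Γ.ends e).2 huw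
            (fun v => v ∈ Γ.bdry Ft)
          have hu2 : (Γ.ends e).1 ∈ Γ.bdry Ft → (φ.f e 0)^2 < t := by
            intro hu
            have h := hbdryval (Γ.ends e).1 hu e heFt (Or.inl rfl)
            rwa [MetricGraph.endVal, if_pos rfl] at h
          have hw2 : (Γ.ends e).2 ∈ Γ.bdry Ft → (φ.f e (Γ.len e))^2 < t := by
            intro hw
            have h := hbdryval (Γ.ends e).2 hw e heFt (Or.inr rfl)
            rwa [MetricGraph.endVal, if_neg huw] at h
          have hcnt2 := hcount e t ht (hgen e (hFtS heFt))
            ((Finset.mem_filter.1 heFt).2)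
          have i1 : (if (Γ.ends e).1 ∈ Γ.bdry Ft then 1 else 0)
              ≤ (if (φ.f e 0)^2 < t then (1:ℕ) else 0) := by
            split_ifs with h1 h2
            · exact le_rfl
            · exact absurd (hu2 h1) h2
            · omega
            · exact le_rfl
          have i2 : (if (Γ.ends e).2 ∈ Γ.bdry Ft then 1 else 0)
              ≤ (if (φ.f e (Γ.len e))^2 < t then (1:ℕ) else 0) := by
            split_ifs with h1 h2
            · exact le_rfl
            · exact absurd (hw2 h1) h2
            · omega
            · exact le_rfl
          calc ((Γ.bdry Ft).filter
                (fun v => (Γ.ends e).1 = v ∨ (Γ.ends e).2 = v)).card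
              ≤ (({(Γ.ends e).1, (Γ.ends e).2} : Finset Γ.V).filter
                  (fun v => v ∈ Γ.bdry Ft)).card := hcard
            _ = (if (Γ.ends e).1 ∈ Γ.bdry Ft then 1 else 0)
                + (if (Γ.ends e).2 ∈ Γ.bdry Ft then 1 else 0) := hpair
            _ ≤ (if (φ.f e 0)^2 < t then 1 else 0)
                + (if (φ.f e (Γ.len e))^2 < t then 1 else 0) := add_le_add i1 i2
            _ ≤ cnt e t := hcnt2
        -- double counting
        have hdouble : (∑ v ∈ Γ.bdry Ft, Γ.degIn Ft v)
            = ∑ e ∈ Ft, ((Γ.bdry Ft).filter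
                (fun v => (Γ.ends e).1 = v ∨ (Γ.ends e).2 = v)).card := by
          simp only [MetricGraph.degIn]
          rw [Finset.sum_congr rfl (fun v _ => Finset.card_filter _ _)]
          rw [Finset.sum_comm]
          exact Finset.sum_congr rfl (fun e _ => (Finset.card_filter _ _).symm)
        have hdegN : Γ.degBdry Ft ≤ ((∑ e ∈ S, cnt e t : ℕ) : ℝ) := by
          rw [MetricGraph.degBdry]
          rw [← Nat.cast_sum]
          apply Nat.cast_le.2
          rw [hdouble]
          calc (∑ e ∈ Ft, ((Γ.bdry Ft).filter
                (fun v => (Γ.ends e).1 = v ∨ (Γ.ends e).2 = v)).card)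
              ≤ ∑ e ∈ Ft, cnt e t := Finset.sum_le_sum hcnt_e
            _ ≤ ∑ e ∈ S, cnt e t := Finset.sum_le_sum_of_subset hFtS
        -- cast of Nfun
        have hNcast : Nfun t = ((∑ e ∈ S, cnt e t : ℕ) : ℝ≥0∞) := by
          rw [hNdef, hcntdef]
          simp only []
          rw [Nat.cast_sum]
          apply Finset.sum_congr rfl
          intro e _
          rw [Finset.card_filter, Nat.cast_sum]
          apply Finset.sum_congr rfl
          intro j _
          rw [Set.indicator_apply]
          by_cases hj : t ∈ Set.Ioo (lo e j) (hi e j)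
          · rw [if_pos hj, if_pos (Set.mem_Ioo.1 hj), Nat.cast_one]
          · rw [if_neg hj, if_neg (fun hc => hj (Set.mem_Ioo.2 hc)), Nat.cast_zero]
        -- combine
        have h1 : (mfun t).toReal ≤ Γ.mes Ft := by
          have h2 := ENNReal.toReal_mono ENNReal.ofReal_ne_top hmlt
          rwa [ENNReal.toReal_ofReal (Γ.mes_nonneg Ft)] at h2
        have hreal : Γ.alpha * (mfun t).toReal ≤ ((∑ e ∈ S, cnt e t : ℕ) : ℝ) :=
          calc Γ.alpha * (mfun t).toReal ≤ Γ.alpha * Γ.mes Ft :=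
              mul_le_mul_of_nonneg_left h1 halpha0
            _ ≤ Γ.degBdry Ft := hcomb
            _ ≤ ((∑ e ∈ S, cnt e t : ℕ) : ℝ) := hdegN
        calc ENNReal.ofReal Γ.alpha * mfun t
            = ENNReal.ofReal Γ.alpha * ENNReal.ofReal ((mfun t).toReal) := by
              rw [ENNReal.ofReal_toReal hmfin]
          _ = ENNReal.ofReal (Γ.alpha * (mfun t).toReal) :=
              (ENNReal.ofReal_mul halpha0).symm
          _ ≤ ENNReal.ofReal ((∑ e ∈ S, cnt e t : ℕ) : ℝ) :=
              ENNReal.ofReal_le_ofReal hreal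
          _ = ((∑ e ∈ S, cnt e t : ℕ) : ℝ≥0∞) := ENNReal.ofReal_natCast _
          _ = Nfun t := hNcast.symm
    -- Step IV: integrate the pointwise inequality
    have hchain : ENNReal.ofReal (Γ.alpha * φ.normSq)
        ≤ ENNReal.ofReal (∑ e ∈ S, 2 * (Real.sqrt (A e) * Real.sqrt (C e))) := by
      rw [ENNReal.ofReal_mul halpha0, ← hStepI]
      rw [← MeasureTheory.lintegral_const_mul' _ _ ENNReal.ofReal_ne_top]
      refine le_trans (MeasureTheory.lintegral_mono_ae ?_) hStepII
      have h1 : ∀ᵐ t ∂(volume.restrict (Set.Ioi (0:ℝ))), t ∉ Bad := by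
        apply MeasureTheory.ae_restrict_of_ae
        have h0 : volume Bad = 0 := hBadfin.measure_zero _
        rw [← MeasureTheory.compl_mem_ae_iff] at h0
        exact h0
      have h2 : ∀ᵐ t ∂(volume.restrict (Set.Ioi (0:ℝ))), t ∈ Set.Ioi (0:ℝ) :=
        MeasureTheory.ae_restrict_mem measurableSet_Ioi
      filter_upwards [h1, h2] with t ht1 ht2
      exact key t ht2 ht1
    have hreal1 : Γ.alpha * φ.normSq
        ≤ ∑ e ∈ S, 2 * (Real.sqrt (A e) * Real.sqrt (C e)) := by
      have hrhs : (0:ℝ) ≤ ∑ e ∈ S, 2 * (Real.sqrt (A e) * Real.sqrt (C e)) :=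
        Finset.sum_nonneg (fun e _ => by positivity)
      exact (ENNReal.ofReal_le_ofReal_iff hrhs).1 hchain
    -- Cauchy–Schwarz over the edge set
    have hCS : (∑ e ∈ S, Real.sqrt (A e) * Real.sqrt (C e))
        ≤ Real.sqrt (∑ e ∈ S, A e) * Real.sqrt (∑ e ∈ S, C e) := by
      have h1 := Finset.sum_mul_sq_le_sq_mul_sq S
        (fun e => Real.sqrt (A e)) (fun e => Real.sqrt (C e))
      rw [Finset.sum_congr rfl (fun e _ => Real.sq_sqrt (hAnn e)),
          Finset.sum_congr rfl (fun e _ => Real.sq_sqrt (hCnn e))] at h1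
      have h4 : (0:ℝ) ≤ ∑ e ∈ S, Real.sqrt (A e) * Real.sqrt (C e) :=
        Finset.sum_nonneg fun e _ => mul_nonneg (Real.sqrt_nonneg _) (Real.sqrt_nonneg _)
      have h5 : (∑ e ∈ S, Real.sqrt (A e) * Real.sqrt (C e))
          ≤ Real.sqrt ((∑ e ∈ S, A e) * (∑ e ∈ S, C e)) := by
        rw [← Real.sqrt_sq h4]
        exact Real.sqrt_le_sqrt h1
      rwa [Real.sqrt_mul (Finset.sum_nonneg (fun e _ => hAnn e))] at h5
    have hreal2 : Γ.alpha * φ.normSq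
        ≤ 2 * (Real.sqrt φ.normSq * Real.sqrt φ.energySq) := by
      calc Γ.alpha * φ.normSq
          ≤ ∑ e ∈ S, 2 * (Real.sqrt (A e) * Real.sqrt (C e)) := hreal1
        _ = 2 * ∑ e ∈ S, Real.sqrt (A e) * Real.sqrt (C e) := by
            rw [Finset.mul_sum]
        _ ≤ 2 * (Real.sqrt (∑ e ∈ S, A e) * Real.sqrt (∑ e ∈ S, C e)) := by
            linarith [hCS]
        _ = 2 * (Real.sqrt φ.normSq * Real.sqrt φ.energySq) := by
            rw [hNormS, hEnerS]
    have hEnn : 0 ≤ φ.energySq := by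
      rw [hEnerS]
      exact Finset.sum_nonneg fun e _ => hCnn e
    have hsq : (Γ.alpha * φ.normSq)^2
        ≤ (2 * (Real.sqrt φ.normSq * Real.sqrt φ.energySq))^2 :=
      pow_le_pow_left₀ (mul_nonneg halpha0 hNpos.le) hreal2 2
    have hexp : (2 * (Real.sqrt φ.normSq * Real.sqrt φ.energySq))^2
        = 4 * (φ.normSq * φ.energySq) := by
      have e1 := Real.sq_sqrt hNpos.le
      have e2 := Real.sq_sqrt hEnn
      calc (2 * (Real.sqrt φ.normSq * Real.sqrt φ.energySq))^2
          = 4 * ((Real.sqrt φ.normSq)^2 * (Real.sqrt φ.energySq)^2) := by ring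
        _ = 4 * (φ.normSq * φ.energySq) := by rw [e1, e2]
    have hfin : Γ.alpha^2 * φ.normSq * φ.normSq ≤ 4 * φ.energySq * φ.normSq := by
      have h9 : (Γ.alpha * φ.normSq)^2 ≤ 4 * (φ.normSq * φ.energySq) := hexp ▸ hsq
      nlinarith [h9]
    exact le_of_mul_le_mul_right hfin hNpos
  refine ⟨part1, ?_⟩
  rw [MetricGraph.lambda0]
  apply le_csInf
  · obtain ⟨φ, hφ⟩ := MetricGraph.exists_nonzero_testfun Γ
    exact ⟨φ.energySq / φ.normSq, φ, hφ, rfl⟩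
  · rintro r ⟨φ, hφ, rfl⟩
    have h1 := part1 φ hφ
    have h2 := φ.normSq_pos hφ
    rw [div_le_div_iff₀ (by norm_num) h2]
    linarith [h1]
end
end

section
/- (Lemma 5.1, Buser-type estimate) Assume ℓ_*(G) = inf_{e ∈ E} |e| > 0. Then the infimum over all nonzero test functions f on G of the Rayleigh quotient ‖f′‖²/‖f‖² is at most (π²/(2ℓ_*(G)))·α(G); that is, λ₀(H) ≤ π²·α(G)/(2ℓ_*(G)). -/
open scoped Classical ENNReal
open MeasureTheory

noncomputable section BuserAux
open Real intervalIntegral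
namespace BuserAux

def ramp (s t : ℝ) : ℝ := Real.sin (π * min t s / (2*s))
def rampD (s t : ℝ) : ℝ := π/(2*s) * Real.cos (π * min t s / (2*s))

lemma ramp_continuous (s : ℝ) : Continuous (ramp s) := by
  unfold ramp; fun_prop

lemma rampD_continuous (s : ℝ) : Continuous (rampD s) := by
  unfold rampD; fun_prop

lemma pi_mul_self_div (s : ℝ) (hs : 0 < s) : π * s / (2*s) = π/2 := by
  field_simp

lemma ramp_of_ge {s t : ℝ} (hs : 0 < s) (ht : s ≤ t) : ramp s t = 1 := by
  unfold ramp; rw [min_eq_right ht, pi_mul_self_div s hs, Real.sin_pi_div_two]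

lemma rampD_of_ge {s t : ℝ} (hs : 0 < s) (ht : s ≤ t) : rampD s t = 0 := by
  unfold rampD; rw [min_eq_right ht, pi_mul_self_div s hs, Real.cos_pi_div_two, mul_zero]

lemma ramp_zero {s : ℝ} (hs : 0 < s) : ramp s 0 = 0 := by
  unfold ramp; rw [min_eq_left hs.le]; simp

lemma hasDerivAt_sin_aux (s x : ℝ) :
    HasDerivAt (fun u : ℝ => Real.sin (π * u / (2*s))) (π/(2*s) * Real.cos (π * x / (2*s))) x := by
  have h1 : HasDerivAt (fun u : ℝ => π * u / (2*s)) (π/(2*s)) x := by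
    simpa [mul_comm, mul_div_assoc] using ((hasDerivAt_id x).const_mul π).div_const (2*s)
  simpa [mul_comm, Function.comp_def] using (Real.hasDerivAt_sin (π * x / (2*s))).comp x h1

lemma hasDerivAt_ramp {s : ℝ} (hs : 0 < s) (t : ℝ) : HasDerivAt (ramp s) (rampD s t) t := by
  rcases lt_trichotomy t s with h | h | h
  · have hev : (fun u : ℝ => Real.sin (π * u / (2*s))) =ᶠ[nhds t] ramp s := by
      filter_upwards [Iio_mem_nhds h] with u hu
      unfold ramp; rw [min_eq_left (le_of_lt hu)]
    have := (hasDerivAt_sin_aux s t).congr_of_eventuallyEq hev.symm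
    unfold rampD; rw [min_eq_left h.le]; exact this
  · subst h
    have hIic : HasDerivWithinAt (ramp t) 0 (Set.Iic t) t := by
      have hbase := ((hasDerivAt_sin_aux t t).hasDerivWithinAt (s := Set.Iic t))
      rw [pi_mul_self_div t hs, Real.cos_pi_div_two, mul_zero] at hbase
      exact hbase.congr (fun u hu => by unfold ramp; rw [min_eq_left hu])
        (by unfold ramp; rw [min_eq_left le_rfl])
    have hIci : HasDerivWithinAt (ramp t) 0 (Set.Ici t) t := by
      have hbase : HasDerivWithinAt (fun _ : ℝ => (1:ℝ)) 0 (Set.Ici t) t :=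
        (hasDerivAt_const t (1:ℝ)).hasDerivWithinAt
      exact hbase.congr (fun u hu => ramp_of_ge hs hu) (ramp_of_ge hs le_rfl)
    have := hIic.union hIci
    rw [Set.Iic_union_Ici] at this
    rw [rampD_of_ge hs le_rfl]
    exact hasDerivWithinAt_univ.mp this
  · have hev : (fun _ : ℝ => (1:ℝ)) =ᶠ[nhds t] ramp s := by
      filter_upwards [Ioi_mem_nhds h] with u hu
      exact (ramp_of_ge hs hu.le).symm
    have := (hasDerivAt_const t (1:ℝ)).congr_of_eventuallyEq hev.symm
    rw [rampD_of_ge hs h.le]; exact this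


def pr (P : Prop) (s t : ℝ) : ℝ := if P then ramp s t else 1
def prD (P : Prop) (s t : ℝ) : ℝ := if P then rampD s t else 0
def cnt (P : Prop) : ℝ := if P then 1 else 0

lemma cnt_nonneg (P : Prop) : 0 ≤ cnt P := by unfold cnt; split <;> norm_num
lemma cnt_le_one (P : Prop) : cnt P ≤ 1 := by unfold cnt; split <;> norm_num

lemma pr_continuous (P : Prop) (s : ℝ) : Continuous (pr P s) := by
  unfold pr; split
  · exact ramp_continuous s
  · exact continuous_const

lemma prD_continuous (P : Prop) (s : ℝ) : Continuous (prD P s) := by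
  unfold prD; split
  · exact rampD_continuous s
  · exact continuous_const

lemma pr_of_ge {P : Prop} {s t : ℝ} (hs : 0 < s) (ht : s ≤ t) : pr P s t = 1 := by
  unfold pr; split
  · exact ramp_of_ge hs ht
  · rfl

lemma prD_of_ge {P : Prop} {s t : ℝ} (hs : 0 < s) (ht : s ≤ t) : prD P s t = 0 := by
  unfold prD; split
  · exact rampD_of_ge hs ht
  · rfl

lemma pr_zero {P : Prop} {s : ℝ} (hs : 0 < s) : pr P s 0 = if P then 0 else 1 := by
  unfold pr; split <;> simp [ramp_zero hs]

lemma hasDerivAt_pr (P : Prop) {s : ℝ} (hs : 0 < s) (t : ℝ) :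
    HasDerivAt (pr P s) (prD P s t) t := by
  unfold pr prD; split
  · exact hasDerivAt_ramp hs t
  · exact hasDerivAt_const t 1

def ef (P1 P2 : Prop) (s L x : ℝ) : ℝ := pr P1 s x * pr P2 s (L - x)
def efD (P1 P2 : Prop) (s L x : ℝ) : ℝ :=
  prD P1 s x * pr P2 s (L - x) - pr P1 s x * prD P2 s (L - x)

lemma ef_continuous (P1 P2 : Prop) (s L : ℝ) : Continuous (ef P1 P2 s L) :=
  ((pr_continuous P1 s)).mul ((pr_continuous P2 s).comp (continuous_const.sub continuous_id))

lemma efD_continuous (P1 P2 : Prop) (s L : ℝ) : Continuous (efD P1 P2 s L) :=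
  (((prD_continuous P1 s)).mul ((pr_continuous P2 s).comp (continuous_const.sub continuous_id))).sub
    (((pr_continuous P1 s)).mul ((prD_continuous P2 s).comp (continuous_const.sub continuous_id)))

lemma hasDerivAt_ef (P1 P2 : Prop) {s : ℝ} (L : ℝ) (hs : 0 < s) (x : ℝ) :
    HasDerivAt (ef P1 P2 s L) (efD P1 P2 s L x) x := by
  have h2 : HasDerivAt (fun y : ℝ => pr P2 s (L - y)) (-prD P2 s (L - x)) x := by
    have hlin : HasDerivAt (fun y : ℝ => L - y) (-1) x := by
      simpa using (hasDerivAt_id x).const_sub L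
    simpa [mul_comm, Function.comp_def] using (hasDerivAt_pr P2 hs (L - x)).comp x hlin
  have h1 := hasDerivAt_pr P1 hs x
  have := h1.mul h2
  rw [show efD P1 P2 s L x = prD P1 s x * pr P2 s (L - x) + pr P1 s x * -prD P2 s (L - x) by unfold efD; ring]
  exact this


lemma int_rampD_sq {s : ℝ} (hs : 0 < s) :
    ∫ x in (0:ℝ)..s, (rampD s x)^2 = π^2/(8*s) := by
  have hc : π/(2*s) ≠ 0 := by positivity
  have h1 : Set.EqOn (fun x => (rampD s x)^2)
      (fun x => (π/(2*s))^2 * ((fun u => Real.cos u ^ 2) (π/(2*s) * x))) (Set.uIcc 0 s) := by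
    intro x hx
    rw [Set.uIcc_of_le hs.le] at hx
    simp only [rampD, min_eq_left hx.2]
    rw [show π * x / (2*s) = π/(2*s) * x by ring]; ring
  rw [intervalIntegral.integral_congr h1, intervalIntegral.integral_const_mul,
    intervalIntegral.integral_comp_mul_left (fun u => Real.cos u ^ 2) hc, mul_zero,
    show π/(2*s) * s = π/2 by field_simp, integral_cos_sq]
  simp [Real.cos_pi_div_two, smul_eq_mul]
  field_simp
  ring

lemma int_ramp_sq {s : ℝ} (hs : 0 < s) :
    ∫ x in (0:ℝ)..s, (ramp s x)^2 = s/2 := by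
  have hc : π/(2*s) ≠ 0 := by positivity
  have h1 : Set.EqOn (fun x => (ramp s x)^2)
      (fun x => (fun u => Real.sin u ^ 2) (π/(2*s) * x)) (Set.uIcc 0 s) := by
    intro x hx
    rw [Set.uIcc_of_le hs.le] at hx
    simp only [ramp, min_eq_left hx.2]
    rw [show π * x / (2*s) = π/(2*s) * x by ring]
  rw [intervalIntegral.integral_congr h1,
    intervalIntegral.integral_comp_mul_left (fun u => Real.sin u ^ 2) hc, mul_zero,
    show π/(2*s) * s = π/2 by field_simp, integral_sin_sq]
  simp [Real.cos_pi_div_two, smul_eq_mul]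
  have hπ : π ≠ 0 := Real.pi_ne_zero
  field_simp

lemma int_prD_sq (P : Prop) {s : ℝ} (hs : 0 < s) :
    ∫ x in (0:ℝ)..s, (prD P s x)^2 = cnt P * (π^2/(8*s)) := by
  unfold prD cnt; split
  · rw [int_rampD_sq hs, one_mul]
  · simp

lemma int_pr_sq (P : Prop) {s : ℝ} (hs : 0 < s) :
    ∫ x in (0:ℝ)..s, (pr P s x)^2 = s - cnt P * (s/2) := by
  unfold pr cnt; split
  · rw [int_ramp_sq hs]; ring
  · simp


lemma int_split {s L : ℝ} {g : ℝ → ℝ} (hg : Continuous g) :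
    ∫ x in (0:ℝ)..L, g x =
      (∫ x in (0:ℝ)..s, g x) + (∫ x in s..(L-s), g x) + ∫ x in (L-s)..L, g x := by
  have h1 := intervalIntegral.integral_add_adjacent_intervals (μ := MeasureTheory.volume) (a := (0:ℝ)) (b := s) (c := L - s)
    (hg.intervalIntegrable _ _) (hg.intervalIntegrable _ _)
  have h2 := intervalIntegral.integral_add_adjacent_intervals (μ := MeasureTheory.volume) (a := (0:ℝ)) (b := L - s) (c := L)
    (hg.intervalIntegrable _ _) (hg.intervalIntegrable _ _)
  linarith

lemma edge_energy (P1 P2 : Prop) {s L : ℝ} (hs : 0 < s) (hL : 2*s ≤ L) :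
    ∫ x in (0:ℝ)..L, (efD P1 P2 s L x)^2 = (cnt P1 + cnt P2) * (π^2/(8*s)) := by
  have hsL : s ≤ L - s := by linarith
  rw [int_split (s := s) (g := fun x => (efD P1 P2 s L x)^2) ((efD_continuous P1 P2 s L).pow 2)]
  have hA : ∫ x in (0:ℝ)..s, (efD P1 P2 s L x)^2 = cnt P1 * (π^2/(8*s)) := by
    rw [intervalIntegral.integral_congr (g := fun x => (prD P1 s x)^2)
      (fun x hx => by
        rw [Set.uIcc_of_le hs.le] at hx
        have h2 : s ≤ L - x := by linarith [hx.2]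
        simp only [efD, pr_of_ge hs h2, prD_of_ge hs h2]; ring)]
    exact int_prD_sq P1 hs
  have hB : ∫ x in s..(L-s), (efD P1 P2 s L x)^2 = 0 := by
    rw [intervalIntegral.integral_congr (g := fun _ => (0:ℝ))
      (fun x hx => by
        rw [Set.uIcc_of_le hsL] at hx
        have h1 : s ≤ x := hx.1
        have h2 : s ≤ L - x := by linarith [hx.2]
        simp only [efD, prD_of_ge hs h1, prD_of_ge hs h2]; ring)]
    simp
  have hC : ∫ x in (L-s)..L, (efD P1 P2 s L x)^2 = cnt P2 * (π^2/(8*s)) := by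
    rw [intervalIntegral.integral_congr (g := fun x => (fun u => (prD P2 s u)^2) (L - x))
      (fun x hx => by
        rw [Set.uIcc_of_le (by linarith : L - s ≤ L)] at hx
        have h1 : s ≤ x := by linarith [hx.1]
        simp only [efD, prD_of_ge hs h1, pr_of_ge hs h1]; ring)]
    have := intervalIntegral.integral_comp_sub_left (a := L - s) (b := L)
      (fun u => (prD P2 s u)^2) L
    simp only [sub_self, sub_sub_cancel] at this
    rw [this]
    exact int_prD_sq P2 hs
  rw [hA, hB, hC]; ring

lemma edge_norm (P1 P2 : Prop) {s L : ℝ} (hs : 0 < s) (hL : 2*s ≤ L) :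
    ∫ x in (0:ℝ)..L, (ef P1 P2 s L x)^2 = L - (cnt P1 + cnt P2) * (s/2) := by
  have hsL : s ≤ L - s := by linarith
  rw [int_split (s := s) (g := fun x => (ef P1 P2 s L x)^2) ((ef_continuous P1 P2 s L).pow 2)]
  have hA : ∫ x in (0:ℝ)..s, (ef P1 P2 s L x)^2 = s - cnt P1 * (s/2) := by
    rw [intervalIntegral.integral_congr (g := fun x => (pr P1 s x)^2)
      (fun x hx => by
        rw [Set.uIcc_of_le hs.le] at hx
        have h2 : s ≤ L - x := by linarith [hx.2]
        simp only [ef, pr_of_ge hs h2]; ring)]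
    exact int_pr_sq P1 hs
  have hB : ∫ x in s..(L-s), (ef P1 P2 s L x)^2 = L - 2*s := by
    rw [intervalIntegral.integral_congr (g := fun _ => (1:ℝ))
      (fun x hx => by
        rw [Set.uIcc_of_le hsL] at hx
        have h1 : s ≤ x := hx.1
        have h2 : s ≤ L - x := by linarith [hx.2]
        simp only [ef, pr_of_ge hs h1, pr_of_ge hs h2]; ring)]
    simp [smul_eq_mul]; ring
  have hC : ∫ x in (L-s)..L, (ef P1 P2 s L x)^2 = s - cnt P2 * (s/2) := by
    rw [intervalIntegral.integral_congr (g := fun x => (fun u => (pr P2 s u)^2) (L - x))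
      (fun x hx => by
        rw [Set.uIcc_of_le (by linarith : L - s ≤ L)] at hx
        have h1 : s ≤ x := by linarith [hx.1]
        simp only [ef, pr_of_ge hs h1]; ring)]
    have := intervalIntegral.integral_comp_sub_left (a := L - s) (b := L)
      (fun u => (pr P2 s u)^2) L
    simp only [sub_self, sub_sub_cancel] at this
    rw [this]
    exact int_pr_sq P2 hs
  rw [hA, hB, hC]; ring

lemma ef_one (P1 P2 : Prop) {s L : ℝ} (hs : 0 < s) (hL : 2*s ≤ L) :
    ef P1 P2 s L s = 1 := by
  unfold ef
  rw [pr_of_ge hs le_rfl, pr_of_ge hs (by linarith), mul_one]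



end BuserAux

section MainAux
open Real

lemma piecewiseC1_global {f g : ℝ → ℝ} {L : ℝ} (hL : 0 < L) (hf : Continuous f)
    (hg : Continuous g) (hd : ∀ t, HasDerivAt f (g t) t) : PiecewiseC1 f L := by
  refine ⟨hf.continuousOn, 1, ![0, L], rfl, rfl, ?_, ?_⟩
  · intro i j hij
    fin_cases i <;> fin_cases j <;> simp_all
  · intro i
    exact ⟨g, hg.continuousOn, fun t _ => (hd t).hasDerivWithinAt⟩

namespace MetricGraph

variable (Γ : MetricGraph)

lemma degIn_le_degree (F : Finset Γ.E) (v : Γ.V) : Γ.degIn F v ≤ Γ.degree v := by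
  unfold degIn degree
  apply Finset.card_le_card
  intro e he
  rw [Set.Finite.mem_toFinset]
  exact (Finset.mem_filter.mp he).2

lemma star_subset_of_not_bdry {F : Finset Γ.E} {v : Γ.V} (hv : v ∈ Γ.vertsOf F)
    (hnb : v ∉ Γ.bdry F) {e : Γ.E} (he : e ∈ Γ.star v) : e ∈ F := by
  have hnlt : ¬ Γ.degIn F v < Γ.degree v := fun hlt => hnb (Finset.mem_filter.mpr ⟨hv, hlt⟩)
  have hle : Γ.degree v ≤ Γ.degIn F v := not_lt.mp hnlt
  have hsub : F.filter (fun e => (Γ.ends e).1 = v ∨ (Γ.ends e).2 = v)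
      ⊆ (Γ.locfin v).toFinset := by
    intro x hx; rw [Set.Finite.mem_toFinset]; exact (Finset.mem_filter.mp hx).2
  have hEq := Finset.eq_of_subset_of_card_le hsub hle
  have hmem : e ∈ (Γ.locfin v).toFinset := by rw [Set.Finite.mem_toFinset]; exact he
  rw [← hEq] at hmem
  exact (Finset.mem_filter.mp hmem).1

lemma mem_vertsOf_of_mem {F : Finset Γ.E} {e : Γ.E} (he : e ∈ F) :
    (Γ.ends e).1 ∈ Γ.vertsOf F ∧ (Γ.ends e).2 ∈ Γ.vertsOf F := by
  constructor
  · exact Finset.mem_union_left _ (Finset.mem_image_of_mem _ he)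
  · exact Finset.mem_union_right _ (Finset.mem_image_of_mem _ he)

lemma cnt_mem {α : Type*} (X : Finset α) (a : α) :
    BuserAux.cnt (a ∈ X) = ∑ v ∈ X, BuserAux.cnt (a = v) := by
  classical
  induction X using Finset.induction_on with
  | empty => simp [BuserAux.cnt]
  | insert _ _ hb ih =>
    rename_i b X'
    rw [Finset.sum_insert hb, ← ih]
    by_cases hab : a = b
    · subst hab
      have haX : a ∉ X' := hb
      simp [BuserAux.cnt, haX]
    · simp [BuserAux.cnt, Finset.mem_insert, hab]

lemma sum_cnt (F : Finset Γ.E) :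
    ∑ e ∈ F, (BuserAux.cnt ((Γ.ends e).1 ∈ Γ.bdry F) + BuserAux.cnt ((Γ.ends e).2 ∈ Γ.bdry F))
      = Γ.degBdry F := by
  unfold degBdry
  have hdeg : ∀ v : Γ.V, (Γ.degIn F v : ℝ)
      = ∑ e ∈ F, (BuserAux.cnt ((Γ.ends e).1 = v) + BuserAux.cnt ((Γ.ends e).2 = v)) := by
    intro v
    unfold degIn
    rw [Finset.card_filter]
    push_cast
    apply Finset.sum_congr rfl
    intro e _
    by_cases h1 : (Γ.ends e).1 = v <;> by_cases h2 : (Γ.ends e).2 = v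
    · exact absurd (h1.trans h2.symm) (Γ.no_loops e)
    · simp [BuserAux.cnt, h1, h2]
    · simp [BuserAux.cnt, h1, h2]
    · simp [BuserAux.cnt, h1, h2]
  rw [Finset.sum_congr rfl (fun e (_ : e ∈ F) => by
    rw [cnt_mem (Γ.bdry F) ((Γ.ends e).1), cnt_mem (Γ.bdry F) ((Γ.ends e).2),
      ← Finset.sum_add_distrib])]
  rw [Finset.sum_comm]
  exact Finset.sum_congr rfl fun v _ => (hdeg v).symm

lemma ellInf_le (e : Γ.E) : Γ.ellInf ≤ Γ.len e :=
  csInf_le ⟨0, fun y hy => by obtain ⟨e', rfl⟩ := hy; exact (Γ.len_pos e').le⟩ ⟨e, rfl⟩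

lemma subconn_singleton (e₀ : Γ.E) : Γ.SubConn {e₀} := by
  classical
  have hmem : ∀ x : Γ.V, x ∈ Γ.vertsOf ({e₀} : Finset Γ.E) ↔
      x = (Γ.ends e₀).1 ∨ x = (Γ.ends e₀).2 := by
    intro x; unfold vertsOf; simp [eq_comm]
  have hu : (Γ.ends e₀).1 ∈ Γ.vertsOf ({e₀} : Finset Γ.E) := (hmem _).mpr (Or.inl rfl)
  have hw : (Γ.ends e₀).2 ∈ Γ.vertsOf ({e₀} : Finset Γ.E) := (hmem _).mpr (Or.inr rfl)
  unfold SubConn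
  have hadj : ((SimpleGraph.fromRel fun u v => ∃ e ∈ ({e₀} : Finset Γ.E),
      Γ.ends e = (u, v)).induce (↑(Γ.vertsOf ({e₀} : Finset Γ.E)) : Set Γ.V)).Adj
        ⟨(Γ.ends e₀).1, hu⟩ ⟨(Γ.ends e₀).2, hw⟩ := by
    rw [SimpleGraph.comap_adj, SimpleGraph.fromRel_adj]
    exact ⟨Γ.no_loops e₀, Or.inl ⟨e₀, Finset.mem_singleton_self e₀, rfl⟩⟩
  haveI : Nonempty {x // x ∈ (↑(Γ.vertsOf ({e₀} : Finset Γ.E)) : Set Γ.V)} := ⟨⟨_, hu⟩⟩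
  constructor
  rintro ⟨a, ha⟩ ⟨b, hb⟩
  rcases (hmem a).mp ha with rfl | rfl <;> rcases (hmem b).mp hb with rfl | rfl
  · exact SimpleGraph.Reachable.refl _
  · exact hadj.reachable
  · exact hadj.symm.reachable
  · exact SimpleGraph.Reachable.refl _

lemma buser_key (hℓ : 0 < Γ.ellInf) (F : Finset Γ.E) (hF : Γ.IsFinSubgraph F) :
    Γ.lambda0 ≤ Real.pi^2/(2*Γ.ellInf) * (Γ.degBdry F / Γ.mes F) := by
  classical
  set s : ℝ := Γ.ellInf / 2 with hs_def
  have hs : 0 < s := by positivity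
  have h2s : ∀ e : Γ.E, 2*s ≤ Γ.len e := fun e => by
    have := Γ.ellInf_le e; rw [hs_def]; linarith
  set P1 : Γ.E → Prop := fun e => (Γ.ends e).1 ∈ Γ.bdry F with hP1
  set P2 : Γ.E → Prop := fun e => (Γ.ends e).2 ∈ Γ.bdry F with hP2
  set f : Γ.E → ℝ → ℝ :=
    fun e => if e ∈ F then BuserAux.ef (P1 e) (P2 e) s (Γ.len e) else fun _ => 0 with hf_def
  have hf_mem : ∀ e ∈ F, f e = BuserAux.ef (P1 e) (P2 e) s (Γ.len e) := fun e he => by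
    rw [hf_def]; simp [he]
  have hf_nmem : ∀ e ∉ F, f e = fun _ => 0 := fun e he => by
    rw [hf_def]; simp [he]
  have hpc : ∀ e, PiecewiseC1 (f e) (Γ.len e) := by
    intro e
    by_cases he : e ∈ F
    · rw [hf_mem e he]
      exact piecewiseC1_global (Γ.len_pos e) (BuserAux.ef_continuous _ _ _ _)
        (BuserAux.efD_continuous _ _ _ _) (BuserAux.hasDerivAt_ef _ _ _ hs)
    · rw [hf_nmem e he]
      exact piecewiseC1_global (Γ.len_pos e) continuous_const continuous_const
        (fun t => hasDerivAt_const t 0)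
  have hval : ∀ v : Γ.V, ∀ e ∈ Γ.star v, Γ.endVal f e v =
      (if v ∈ Γ.bdry F ∨ v ∉ Γ.vertsOf F then 0 else 1) := by
    intro v e he
    unfold endVal
    by_cases h1 : (Γ.ends e).1 = v
    · rw [if_pos h1]
      by_cases heF : e ∈ F
      · rw [hf_mem e heF]
        have hv1 : v ∈ Γ.vertsOf F := h1 ▸ (Γ.mem_vertsOf_of_mem heF).1
        unfold BuserAux.ef
        rw [sub_zero, BuserAux.pr_of_ge (P := P2 e) (t := Γ.len e) hs (by linarith [h2s e]),
          BuserAux.pr_zero (P := P1 e) hs, mul_one]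
        simp [hP1, h1, hv1]
      · rw [hf_nmem e heF]
        have hor : v ∈ Γ.bdry F ∨ v ∉ Γ.vertsOf F := by
          by_contra hcon
          push_neg at hcon
          exact heF (Γ.star_subset_of_not_bdry hcon.2 hcon.1 he)
        simp [hor]
    · rw [if_neg h1]
      have h2 : (Γ.ends e).2 = v := he.resolve_left h1
      by_cases heF : e ∈ F
      · rw [hf_mem e heF]
        have hv2 : v ∈ Γ.vertsOf F := h2 ▸ (Γ.mem_vertsOf_of_mem heF).2
        unfold BuserAux.ef
        rw [sub_self, BuserAux.pr_of_ge (P := P1 e) (t := Γ.len e) hs (by linarith [h2s e]),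
          BuserAux.pr_zero (P := P2 e) hs, one_mul]
        simp [hP2, h2, hv2]
      · rw [hf_nmem e heF]
        have hor : v ∈ Γ.bdry F ∨ v ∉ Γ.vertsOf F := by
          by_contra hcon
          push_neg at hcon
          exact heF (Γ.star_subset_of_not_bdry hcon.2 hcon.1 he)
        simp [hor]
  have hvc : ∀ e e' : Γ.E, ∀ v : Γ.V, e ∈ Γ.star v → e' ∈ Γ.star v →
      Γ.endVal f e v = Γ.endVal f e' v := fun e e' v he he' => by
    rw [hval v e he, hval v e' he']
  have hfs : {e : Γ.E | ∃ x ∈ Set.Icc 0 (Γ.len e), f e x ≠ 0}.Finite := by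
    apply Set.Finite.subset F.finite_toSet
    rintro e ⟨x, -, hx⟩
    by_contra heF
    exact hx (by rw [hf_nmem e heF])
  set φ : MetricGraph.TestFun Γ := ⟨f, hpc, hvc, hfs⟩ with hφ
  obtain ⟨e₀, he₀⟩ := hF.1
  have hnz : φ.Nonzero := by
    refine ⟨e₀, s, ⟨hs.le, by linarith [h2s e₀]⟩, ?_⟩
    show f e₀ s ≠ 0
    rw [hf_mem e₀ he₀, BuserAux.ef_one _ _ hs (h2s e₀)]
    norm_num
  have hE : φ.energySq = Γ.degBdry F * (Real.pi^2/(8*s)) := by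
    show (∑ᶠ e : Γ.E, ∫ x in (0:ℝ)..Γ.len e, (deriv (f e) x)^2) = _
    rw [finsum_eq_sum_of_support_subset _ (s := F) (fun e he => by
      simp only [Function.mem_support] at he
      by_contra heF
      apply he
      rw [hf_nmem e heF]
      simp)]
    rw [← Γ.sum_cnt F, Finset.sum_mul]
    apply Finset.sum_congr rfl
    intro e he
    have hder : deriv (f e) = BuserAux.efD (P1 e) (P2 e) s (Γ.len e) := by
      funext x
      rw [hf_mem e he]
      exact (BuserAux.hasDerivAt_ef _ _ _ hs x).deriv
    rw [hder, BuserAux.edge_energy _ _ hs (h2s e)]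
  have hNeq : φ.normSq
      = ∑ e ∈ F, (Γ.len e - (BuserAux.cnt (P1 e) + BuserAux.cnt (P2 e)) * (s/2)) := by
    show (∑ᶠ e : Γ.E, ∫ x in (0:ℝ)..Γ.len e, (f e x)^2) = _
    rw [finsum_eq_sum_of_support_subset _ (s := F) (fun e he => by
      simp only [Function.mem_support] at he
      by_contra heF
      apply he
      rw [hf_nmem e heF]
      simp)]
    apply Finset.sum_congr rfl
    intro e he
    rw [hf_mem e he]
    exact BuserAux.edge_norm _ _ hs (h2s e)
  have hmes_pos : 0 < Γ.mes F := Finset.sum_pos (fun e _ => Γ.len_pos e) hF.1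
  have hN : Γ.mes F / 2 ≤ φ.normSq := by
    rw [hNeq]
    unfold mes
    rw [Finset.sum_div]
    apply Finset.sum_le_sum
    intro e he
    have h2e := h2s e
    have c1 := BuserAux.cnt_le_one (P1 e)
    have c1' := BuserAux.cnt_nonneg (P1 e)
    have c2 := BuserAux.cnt_le_one (P2 e)
    have c2' := BuserAux.cnt_nonneg (P2 e)
    nlinarith [hs]
  have hdeg_nonneg : 0 ≤ Γ.degBdry F := Finset.sum_nonneg fun v _ => Nat.cast_nonneg _
  have hE_nonneg : 0 ≤ φ.energySq := by
    rw [hE]; positivity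
  have hNpos : 0 < φ.normSq := lt_of_lt_of_le (by positivity) hN
  have hbdd : BddBelow {r : ℝ | ∃ ψ : Γ.TestFun, ψ.Nonzero ∧ r = ψ.energySq / ψ.normSq} := by
    refine ⟨0, fun r hr => ?_⟩
    obtain ⟨ψ, -, rfl⟩ := hr
    apply div_nonneg
    · exact finsum_nonneg fun e =>
        intervalIntegral.integral_nonneg (Γ.len_pos e).le (fun x _ => sq_nonneg _)
    · exact finsum_nonneg fun e =>
        intervalIntegral.integral_nonneg (Γ.len_pos e).le (fun x _ => sq_nonneg _)
  have h1 : Γ.lambda0 ≤ φ.energySq / φ.normSq := csInf_le hbdd ⟨φ, hnz, rfl⟩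
  have h2 : φ.energySq / φ.normSq ≤ φ.energySq / (Γ.mes F / 2) :=
    div_le_div_of_nonneg_left hE_nonneg (by positivity) hN
  have h3 : φ.energySq / (Γ.mes F / 2) = Real.pi^2/(2*Γ.ellInf) * (Γ.degBdry F / Γ.mes F) := by
    rw [hE, hs_def]
    field_simp
    ring
  linarith [h1, h2, h3.le, h3.ge]

end MetricGraph
end MainAux

end BuserAux

/-- **Lemma 5.1 (Buser-type estimate).** If `ℓ_*(G) = inf_e |e| > 0`, then
`λ₀(H) ≤ π²·α(G) / (2 ℓ_*(G))`. -/
theorem buser_estimate (Γ : MetricGraph) (h : 0 < Γ.ellInf) :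
    Γ.lambda0 ≤ Real.pi ^ 2 * Γ.alpha / (2 * Γ.ellInf) := by
  have hc : 0 < Real.pi ^ 2 / (2 * Γ.ellInf) := by positivity
  have hne : Nonempty Γ.E := by
    have := Γ.infE
    infer_instance
  obtain ⟨e₀⟩ := hne
  have hsub : Γ.IsFinSubgraph {e₀} := ⟨Finset.singleton_nonempty e₀, Γ.subconn_singleton e₀⟩
  have hset_ne : {r : ℝ | ∃ F : Finset Γ.E,
      Γ.IsFinSubgraph F ∧ r = Γ.degBdry F / Γ.mes F}.Nonempty :=
    ⟨_, {e₀}, hsub, rfl⟩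
  have hα : Γ.lambda0 / (Real.pi ^ 2 / (2 * Γ.ellInf)) ≤ Γ.alpha := by
    apply le_csInf hset_ne
    rintro r ⟨F, hF, rfl⟩
    rw [div_le_iff₀ hc]
    have := Γ.buser_key h F hF
    linarith [this, mul_comm (Real.pi ^ 2 / (2 * Γ.ellInf)) (Γ.degBdry F / Γ.mes F)]
  rw [div_le_iff₀ hc] at hα
  calc Γ.lambda0 ≤ Γ.alpha * (Real.pi ^ 2 / (2 * Γ.ellInf)) := hα
    _ = Real.pi ^ 2 * Γ.alpha / (2 * Γ.ellInf) := by ring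
end
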